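/- arXiv:2302.07110 — 6 statements merged into one kernel-verified Lean document; each statement's English description precedes it below -/
import Mathlib

section
/- Let P = v_0 v_1 ... v_l be a path in a graph G with x = v_0 and y = v_l, and let H be a component of G - V(P) having a neighbor v_i on P. If P is an x-fiber, then i < l, and moreover if 0 < i then v_l v_{i-1} is not an edge of G. Similarly, if P is a y-fiber, then 0 < i, and if i < l then v_0 v_{i+1} is not an edge of G. -/
open SimpleGraph

namespace GallaiFormal

variable {V : Type}

/-- A vertex `v` is a *Gallai vertex* of `G` if every longest path of `G` contains `v`. -/
def IsGallaiVertex (G : SimpleGraph V) (v : V) : Prop :=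
  ∀ ⦃a b : V⦄ (p : G.Walk a b), p.IsPath →
    (∀ ⦃c d : V⦄ (q : G.Walk c d), q.IsPath → q.length ≤ p.length) → v ∈ p.support

/-- `G` has no induced subgraph isomorphic to `H` (`G` is `H`-free). -/
def IsFree {W : Type} (G : SimpleGraph V) (H : SimpleGraph W) : Prop :=
  ¬ ∃ s : Set V, Nonempty (H ≃g (G.induce s))

/-- `A` is an independent set of `G`. -/
def IsIndepSet (G : SimpleGraph V) (A : Set V) : Prop :=
  A.Pairwise fun a b => ¬ G.Adj a b

/-- `H` is (the vertex set of) a connected component of `G - s`. -/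
def IsCompOutside (G : SimpleGraph V) (s : Set V) (H : Set V) : Prop :=
  H.Nonempty ∧ Disjoint H s ∧ (G.induce H).Connected ∧
    ∀ u ∈ H, ∀ v : V, G.Adj u v → v ∉ s → v ∈ H

/-- The set of attachment points of `H` on the path `p`. -/
def attachSet (G : SimpleGraph V) {x y : V} (p : G.Walk x y) (H : Set V) : Set V :=
  {w | w ∈ p.support ∧ ∃ u ∈ H, G.Adj u w}

/-- `p` is an `x`-fiber: a longest path among paths having its first endpoint as an endpoint. -/
def IsEndFiber (G : SimpleGraph V) {x y : V} (p : G.Walk x y) : Prop :=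
  p.IsPath ∧ ∀ (z : V) (q : G.Walk x z), q.IsPath → q.length ≤ p.length

/-- `p` is an `xy`-fiber: a longest path among paths with the same two endpoints. -/
def IsFiberBetween (G : SimpleGraph V) {x y : V} (p : G.Walk x y) : Prop :=
  p.IsPath ∧ ∀ q : G.Walk x y, q.IsPath → q.length ≤ p.length

/-- `p` is a longest path of `G`. -/
def IsLongestPath (G : SimpleGraph V) {x y : V} (p : G.Walk x y) : Prop :=
  p.IsPath ∧ ∀ ⦃a b : V⦄ (q : G.Walk a b), q.IsPath → q.length ≤ p.length

/-- The (index) interval `[a, b]` of positions on `p` is a maximal interval avoiding `S`;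
these intervals correspond to the components of `P - S`. -/
def IsGapInterval (G : SimpleGraph V) {x y : V} (p : G.Walk x y) (S : Set V) (a b : ℕ) : Prop :=
  a ≤ b ∧ b ≤ p.length ∧ (∀ i, a ≤ i → i ≤ b → p.getVert i ∉ S) ∧
    (a = 0 ∨ p.getVert (a - 1) ∈ S) ∧ (b = p.length ∨ p.getVert (b + 1) ∈ S)

/-- The rank of the vertex at position `j` on `p` (w.r.t. the attachment set `S`): the maximum
length of a subpath of `p` ending at position `j` and avoiding `S`. -/
noncomputable def rankAt (G : SimpleGraph V) {x y : V} (p : G.Walk x y) (S : Set V) (j : ℕ) : ℕ :=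
  sSup {r : ℕ | ∃ a : ℕ, a + r = j ∧ ∀ i, a ≤ i → i ≤ j → p.getVert i ∉ S}

/-- `G` is `k`-connected. -/
def IsKConnected [Fintype V] (k : ℕ) (G : SimpleGraph V) : Prop :=
  k < Fintype.card V ∧ ∀ s : Set V, s.ncard < k → (G.induce sᶜ).Connected

/-- `B` is (the vertex set of) a block of `G`: a maximal connected subgraph without cut-vertices. -/
def IsBlock (G : SimpleGraph V) (B : Set V) : Prop :=
  (G.induce B).Connected ∧ (∀ v ∈ B, (G.induce (B \ {v})).Preconnected) ∧
    ∀ B' : Set V, B ⊆ B' → (G.induce B').Connected →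
      (∀ v ∈ B', (G.induce (B' \ {v})).Preconnected) → B' = B

/-- `B` is a special block of `G`: a block such that every longest path contains an edge of `B`. -/
def IsSpecialBlock (G : SimpleGraph V) (B : Set V) : Prop :=
  IsBlock G B ∧ ∀ ⦃a b : V⦄ (p : G.Walk a b), IsLongestPath G p →
    ∃ i < p.length, p.getVert i ∈ B ∧ p.getVert (i + 1) ∈ B


namespace Aux

open SimpleGraph.Walk

variable {G : SimpleGraph V}

/-- Take the first `n` darts of a walk. -/
def wtake {u v : V} (p : G.Walk u v) (n : ℕ) : G.Walk u (p.getVert n) :=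
  match p, n with
  | .nil, _ => .nil
  | .cons h q, 0 => Walk.nil.copy rfl ((Walk.cons h q).getVert_zero).symm
  | .cons h q, (n + 1) => (Walk.cons h (wtake q n)).copy rfl (getVert_cons_succ _ h).symm

lemma support_wtake {u v : V} (p : G.Walk u v) (n : ℕ) :
    (wtake p n).support = p.support.take (n + 1) := by
  induction p generalizing n with
  | nil => cases n <;> simp [wtake]
  | cons h q ih =>
    cases n with
    | zero => simp [wtake]
    | succ n => simp [wtake, ih n]

lemma support_drop {u v : V} (p : G.Walk u v) (n : ℕ) (hn : n ≤ p.length) :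
    (p.drop n).support = p.support.drop n := by
  induction p generalizing n with
  | nil =>
    simp only [Walk.length_nil, Nat.le_zero] at hn
    subst hn
    simp [Walk.drop]
  | cons h q ih =>
    cases n with
    | zero => simp [Walk.drop]
    | succ n =>
      simpa [Walk.drop] using ih n (by simpa using hn)

lemma length_wtake {u v : V} (p : G.Walk u v) (n : ℕ) (hn : n ≤ p.length) :
    (wtake p n).length = n := by
  have h1 := length_support (wtake p n)
  rw [support_wtake, List.length_take, length_support] at h1
  omega

lemma length_drop {u v : V} (p : G.Walk u v) (n : ℕ) (hn : n ≤ p.length) :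
    (p.drop n).length = p.length - n := by
  have h1 := length_support (p.drop n)
  rw [support_drop p n hn, List.length_drop, length_support] at h1
  omega

lemma main (G : SimpleGraph V) {x y : V} (p : G.Walk x y) (H : Set V)
    (hH : IsCompOutside G {v | v ∈ p.support} H)
    (i : ℕ) (hi : i ≤ p.length) (hatt : ∃ u ∈ H, G.Adj u (p.getVert i))
    (hf : IsEndFiber G p) :
    i < p.length ∧ (0 < i → ¬ G.Adj y (p.getVert (i - 1))) := by
  obtain ⟨u, huH, huv⟩ := hatt
  have hu : u ∉ p.support := fun h => Set.disjoint_left.mp hH.2.1 huH h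
  have hLnd : p.support.Nodup := (Walk.isPath_def p).mp hf.1
  have hA : i < p.length := by
    by_contra hlt
    have hiy : p.getVert i = y := p.getVert_of_length_le (by omega)
    have hyu : G.Adj y u := hiy ▸ huv.symm
    have hq : (p.concat hyu).IsPath := by
      rw [Walk.isPath_def, Walk.support_concat, List.nodup_append]
      refine ⟨hLnd, List.nodup_singleton u, ?_⟩
      intro a ha b hau
      rw [List.mem_singleton] at hau
      exact fun hab => hu (by rw [← hau, ← hab]; exact ha)
    have := hf.2 u _ hq
    rw [Walk.length_concat] at this
    omega
  refine ⟨hA, fun hipos hadj => ?_⟩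
  set q : G.Walk x u :=
    (wtake p (i-1)).append (Walk.cons hadj.symm (((p.drop i).reverse).concat huv.symm)) with hqdef
  have hi1 : i - 1 + 1 = i := by omega
  have hlen : q.length = p.length + 1 := by
    rw [hqdef, Walk.length_append, Walk.length_cons, Walk.length_concat, Walk.length_reverse,
      length_wtake p _ (by omega), length_drop p i hi]
    omega
  have hsup : q.support = p.support.take i ++ ((p.support.drop i).reverse ++ [u]) := by
    rw [hqdef, Walk.support_append, Walk.support_cons, List.tail_cons, Walk.support_concat,
      Walk.support_reverse, support_wtake, support_drop p i hi, hi1]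
  have hqp : q.IsPath := by
    rw [Walk.isPath_def, hsup]
    have hsplit : (p.support.take i ++ p.support.drop i).Nodup := by
      rw [List.take_append_drop]; exact hLnd
    rw [List.nodup_append] at hsplit
    rw [List.nodup_append, List.nodup_append]
    refine ⟨hsplit.1, ⟨by simpa using hsplit.2.1, List.nodup_singleton u, ?_⟩, ?_⟩
    · intro a ha b hau
      rw [List.mem_reverse] at ha
      rw [List.mem_singleton] at hau
      exact fun hab => hu (by rw [← hau, ← hab]; exact List.drop_subset _ _ ha)
    · intro a ha b hamem
      rw [List.mem_append, List.mem_reverse, List.mem_singleton] at hamem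
      rcases hamem with h1 | h1
      · exact hsplit.2.2 a ha b h1
      · exact fun hab => hu (by rw [← h1, ← hab]; exact List.take_subset _ _ ha)
  have := hf.2 u q hqp
  omega

end Aux

/-- Let `p` be an `xy`-path and `H` a component of `G - V(p)` with a neighbor
at position `i` of `p`.  If `p` is an `x`-fiber then `i < l`, and if `0 < i` then
`y v_{i-1} ∉ E(G)`; if `p` is a `y`-fiber then `0 < i`, and if `i < l` then `x v_{i+1} ∉ E(G)`. -/
theorem stmt3 (G : SimpleGraph V) {x y : V} (p : G.Walk x y) (H : Set V)
    (hH : IsCompOutside G {v | v ∈ p.support} H)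
    (i : ℕ) (hi : i ≤ p.length) (hatt : ∃ u ∈ H, G.Adj u (p.getVert i)) :
    (IsEndFiber G p → i < p.length ∧ (0 < i → ¬ G.Adj y (p.getVert (i - 1)))) ∧
    ((p.IsPath ∧ ∀ (z : V) (q : G.Walk z y), q.IsPath → q.length ≤ p.length) →
      0 < i ∧ (i < p.length → ¬ G.Adj x (p.getVert (i + 1))))  := by
  constructor
  · exact fun hf => Aux.main G p H hH i hi hatt hf
  · rintro ⟨hp, hmax⟩
    have hH' : IsCompOutside G {v | v ∈ p.reverse.support} H := by
      have hset : {v | v ∈ p.reverse.support} = {v | v ∈ p.support} := by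
        ext v; simp [Walk.support_reverse]
      rw [hset]; exact hH
    have hf' : IsEndFiber G p.reverse := by
      refine ⟨hp.reverse, fun z q hq => ?_⟩
      rw [Walk.length_reverse]
      have := hmax z q.reverse hq.reverse
      rwa [Walk.length_reverse] at this
    have hj : p.length - i ≤ p.reverse.length := by rw [Walk.length_reverse]; omega
    have hatt' : ∃ u ∈ H, G.Adj u (p.reverse.getVert (p.length - i)) := by
      obtain ⟨u, hu1, hu2⟩ := hatt
      refine ⟨u, hu1, ?_⟩
      rw [Walk.getVert_reverse]
      have hii : p.length - (p.length - i) = i := by omega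
      rw [hii]; exact hu2
    obtain ⟨h1, h2⟩ := Aux.main G p.reverse H hH' (p.length - i) hj hatt' hf'
    rw [Walk.length_reverse] at h1
    refine ⟨by omega, fun hil hadj => ?_⟩
    have h3 := h2 (by omega)
    rw [Walk.getVert_reverse] at h3
    have hii : p.length - (p.length - i - 1) = i + 1 := by omega
    rw [hii] at h3
    exact h3 hadj


end GallaiFormal
end

section
/- Let P be a path in a graph G with endpoints x and y, and let H be a component of G - V(P) with attachment points s and s', where s appears before s' when traversing P from x to y. Then: (1) if s and s' are consecutive on P, then G contains a path with endpoints x and y that is longer than P; (2) if s and s' are not consecutive along P, the vertex w immediately follows s and the vertex w' immediately follows s' along P, and ww' is an edge of G, then G contains a path with endpoints x and y that is longer than P; (3) if s and s' are not consecutive along P, the vertex w immediately precedes s and the vertex w' immediately precedes s' along P, and ww' is an edge of G, then G contains a path with endpoints x and y that is longer than P. -/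
open SimpleGraph

namespace GallaiFormal

variable {V : Type}

section Aux
variable {G : SimpleGraph V}

lemma getVert_mem_support {u v : V} (p : G.Walk u v) (k : ℕ) : p.getVert k ∈ p.support := by
  by_cases h : k ≤ p.length
  · exact Walk.mem_support_iff_exists_getVert.mpr ⟨k, rfl, h⟩
  · rw [p.getVert_of_length_le (by omega)]
    exact p.end_mem_support

/-- The prefix of a walk of length `n`. -/
def wtake {u v : V} : (p : G.Walk u v) → (n : ℕ) → G.Walk u (p.getVert n)
  | p, 0 => Walk.nil.copy rfl (p.getVert_zero).symm
  | Walk.nil, _+1 => Walk.nil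
  | Walk.cons h q, n+1 => Walk.cons h (wtake q n)

lemma length_wtake {u v : V} (p : G.Walk u v) (n : ℕ) (h : n ≤ p.length) :
    (wtake p n).length = n := by
  induction p generalizing n with
  | nil => cases n with
    | zero => simp [wtake]
    | succ n => simp at h
  | cons hadj q ih => cases n with
    | zero => simp [wtake]
    | succ n =>
      simp only [Walk.length_cons, Nat.add_le_add_iff_right] at h
      simp [wtake, ih n h]

lemma getVert_wtake {u v : V} (p : G.Walk u v) (n i : ℕ) (h : i ≤ n) :
    (wtake p n).getVert i = p.getVert i := by
  induction p generalizing n i with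
  | nil =>
    cases n with
    | zero => interval_cases i; simp [wtake]
    | succ n => simp [wtake]
  | cons hadj q ih =>
    cases n with
    | zero => interval_cases i; simp [wtake]
    | succ n =>
      cases i with
      | zero => simp [wtake]
      | succ i =>
        simp only [wtake, Walk.getVert_cons_succ]
        exact ih n i (by omega)

lemma support_wtake_subset {u v : V} (p : G.Walk u v) (n : ℕ) :
    (wtake p n).support ⊆ p.support := by
  induction p generalizing n with
  | nil => cases n <;> simp [wtake]
  | cons hadj q ih =>
    cases n with
    | zero => intro a ha; simp [wtake] at ha; simp [ha]
    | succ n =>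
      intro a ha
      simp only [wtake, Walk.support_cons, List.mem_cons] at ha ⊢
      have ha' : a ∈ (Walk.cons hadj (wtake q n)).support := ha
      rw [Walk.support_cons, List.mem_cons] at ha'
      rcases ha' with h | h
      · simp [h]
      · simp [ih n h]

lemma isPath_wtake {u v : V} {p : G.Walk u v} (hp : p.IsPath) (n : ℕ) :
    (wtake p n).IsPath := by
  induction p generalizing n with
  | nil => cases n <;> simp [wtake]
  | cons hadj q ih =>
    cases n with
    | zero => simp [wtake]
    | succ n =>
      rw [Walk.cons_isPath_iff] at hp
      show (Walk.cons hadj (wtake q n)).IsPath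
      rw [Walk.cons_isPath_iff]
      exact ⟨ih hp.1 n, fun h => hp.2 (support_wtake_subset q n h)⟩

lemma mem_support_wtake_iff {u v : V} (p : G.Walk u v) (n : ℕ) (h : n ≤ p.length) {a : V} :
    a ∈ (wtake p n).support ↔ ∃ k, k ≤ n ∧ p.getVert k = a := by
  rw [Walk.mem_support_iff_exists_getVert]
  constructor
  · rintro ⟨k, hk, hkl⟩
    rw [length_wtake p n h] at hkl
    exact ⟨k, hkl, by rw [← getVert_wtake p n k hkl]; exact hk⟩
  · rintro ⟨k, hk, hkv⟩
    exact ⟨k, by rw [getVert_wtake p n k hk]; exact hkv, by rw [length_wtake p n h]; exact hk⟩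

lemma length_drop {u v : V} (p : G.Walk u v) (n : ℕ) :
    (p.drop n).length = p.length - n := by
  induction p generalizing n with
  | nil => cases n <;> simp [Walk.drop]
  | cons hadj q ih =>
    cases n with
    | zero => simp [Walk.drop]
    | succ n => simp [Walk.drop, ih n]

lemma getVert_drop {u v : V} (p : G.Walk u v) (n k : ℕ) :
    (p.drop n).getVert k = p.getVert (n + k) := by
  induction p generalizing n with
  | nil => cases n <;> simp [Walk.drop, Walk.getVert_of_length_le]
  | cons hadj q ih =>
    cases n with
    | zero => simp [Walk.drop]
    | succ n =>
      simp only [Walk.drop, Walk.getVert_copy]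
      exact (ih n).trans (by rw [show n + 1 + k = (n + k) + 1 by omega, Walk.getVert_cons_succ])

lemma support_drop_subset {u v : V} (p : G.Walk u v) (n : ℕ) :
    (p.drop n).support ⊆ p.support := by
  intro a ha
  rw [Walk.mem_support_iff_exists_getVert] at ha
  obtain ⟨k, hk, _⟩ := ha
  rw [getVert_drop] at hk
  rw [← hk]; exact getVert_mem_support p _

lemma isPath_drop {u v : V} {p : G.Walk u v} (hp : p.IsPath) (n : ℕ) :
    (p.drop n).IsPath := by
  induction p generalizing n with
  | nil => cases n <;> simp [Walk.drop]
  | cons hadj q ih =>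
    cases n with
    | zero => simpa [Walk.drop] using hp
    | succ n => simpa [Walk.drop] using ih hp.of_cons n

lemma mem_support_drop_iff {u v : V} (p : G.Walk u v) (n : ℕ) (h : n ≤ p.length) {a : V} :
    a ∈ (p.drop n).support ↔ ∃ k, n ≤ k ∧ k ≤ p.length ∧ p.getVert k = a := by
  rw [Walk.mem_support_iff_exists_getVert]
  constructor
  · rintro ⟨m, hm, hml⟩
    rw [length_drop] at hml
    rw [getVert_drop] at hm
    exact ⟨n + m, by omega, by omega, hm⟩
  · rintro ⟨k, hnk, hkl, hkv⟩
    exact ⟨k - n, by rw [getVert_drop]; rw [show n + (k - n) = k by omega]; exact hkv,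
      by rw [length_drop]; omega⟩

lemma getVert_inj {u v : V} {p : G.Walk u v} (hp : p.IsPath) {i j : ℕ}
    (hi : i ≤ p.length) (hj : j ≤ p.length) (h : p.getVert i = p.getVert j) : i = j := by
  induction p generalizing i j with
  | nil => simp only [Walk.length_nil, Nat.le_zero] at hi hj; omega
  | cons hadj q ih =>
    rw [Walk.cons_isPath_iff] at hp
    cases i with
    | zero =>
      cases j with
      | zero => rfl
      | succ j =>
        exfalso
        rw [Walk.getVert_zero, Walk.getVert_cons_succ] at h
        exact hp.2 (h ▸ getVert_mem_support q j)
    | succ i =>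
      cases j with
      | zero =>
        exfalso
        rw [Walk.getVert_zero, Walk.getVert_cons_succ] at h
        exact hp.2 (h.symm ▸ getVert_mem_support q i)
      | succ j =>
        simp only [Walk.getVert_cons_succ] at h
        simp only [Walk.length_cons] at hi hj
        have := ih hp.1 (by omega) (by omega) h
        omega

lemma append_isPath {u v w : V} {p : G.Walk u v} {q : G.Walk v w}
    (hp : p.IsPath) (hq : q.IsPath)
    (h : ∀ a, a ∈ p.support → a ∈ q.support → a = v) : (p.append q).IsPath := by
  rw [Walk.isPath_def, Walk.support_append]
  have hqn := hq.support_nodup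
  rw [q.support_eq_cons, List.nodup_cons] at hqn
  refine List.Nodup.append hp.support_nodup hqn.2 ?_
  intro a hap haq
  have : a ∈ q.support := by rw [q.support_eq_cons]; exact List.mem_cons_of_mem _ haq
  exact hqn.1 ((h a hap this) ▸ haq)

lemma exists_path_in (H : Set V) (hconn : (G.induce H).Connected) {u u' : V}
    (hu : u ∈ H) (hu' : u' ∈ H) :
    ∃ r : G.Walk u u', r.IsPath ∧ ∀ a ∈ r.support, a ∈ H := by
  haveI : DecidableEq ↑H := Classical.decEq _
  obtain ⟨w⟩ := hconn.preconnected ⟨u, hu⟩ ⟨u', hu'⟩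
  refine ⟨w.bypass.map (Embedding.induce H (G := G)).toHom, ?_, ?_⟩
  · exact Walk.map_isPath_of_injective (Embedding.induce H (G := G)).injective w.bypass_isPath
  · intro a ha
    have ha' : a ∈ (w.bypass.map (Embedding.induce H (G := G)).toHom).support := ha
    rw [Walk.support_map, List.mem_map] at ha'
    obtain ⟨b, _, hb⟩ := ha'
    rw [← hb]; exact b.2




lemma case1 {x y : V} (p : G.Walk x y) (hp : p.IsPath)
    (H : Set V) (hH : IsCompOutside G {v | v ∈ p.support} H)
    (i : ℕ) (hj : i + 1 ≤ p.length)
    (hsi : ∃ u ∈ H, G.Adj u (p.getVert i)) (hsj : ∃ u ∈ H, G.Adj u (p.getVert (i + 1))) :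
    ∃ q : G.Walk x y, q.IsPath ∧ p.length < q.length := by
  obtain ⟨u, hu, hadju⟩ := hsi
  obtain ⟨u', hu', hadju'⟩ := hsj
  obtain ⟨-, hdisj, hconn, -⟩ := hH
  have hHs : ∀ a ∈ H, a ∉ p.support := fun a ha => Set.disjoint_left.mp hdisj ha
  obtain ⟨r, hr, hrH⟩ := exists_path_in H hconn hu hu'
  have hil : i ≤ p.length := by omega
  set T := p.drop (i + 1) with hT
  have hTmem : ∀ a ∈ T.support, ∃ k, i + 1 ≤ k ∧ k ≤ p.length ∧ p.getVert k = a :=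
    fun a ha => (mem_support_drop_iff p (i + 1) hj).mp ha
  -- W1 = cons hadju' T
  have hW1 : (Walk.cons hadju' T).IsPath := by
    rw [Walk.cons_isPath_iff]
    refine ⟨isPath_drop hp _, fun h => ?_⟩
    exact hHs u' hu' (support_drop_subset p (i + 1) h)
  -- W2 = r.append W1
  have hW2 : (r.append (Walk.cons hadju' T)).IsPath := by
    refine append_isPath hr hW1 ?_
    intro a har haw
    rw [Walk.support_cons, List.mem_cons] at haw
    rcases haw with h | h
    · exact h
    · exact absurd (support_drop_subset p (i + 1) h) (hHs a (hrH a har))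
  -- W3 = cons hadju.symm W2
  have hgm : ∀ k, p.getVert k ∈ p.support := getVert_mem_support p
  have hW3 : (Walk.cons hadju.symm (r.append (Walk.cons hadju' T))).IsPath := by
    rw [Walk.cons_isPath_iff]
    refine ⟨hW2, fun h => ?_⟩
    rw [Walk.mem_support_append_iff] at h
    rcases h with h | h
    · exact hHs _ (hrH _ h) (hgm i)
    · rw [Walk.support_cons, List.mem_cons] at h
      rcases h with h | h
      · exact hHs u' hu' (h ▸ hgm i)
      · obtain ⟨k, hk1, hk2, hk3⟩ := hTmem _ h
        have := getVert_inj hp hk2 hil hk3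
        omega
  refine ⟨(wtake p i).append (Walk.cons hadju.symm (r.append (Walk.cons hadju' T))), ?_, ?_⟩
  · refine append_isPath (isPath_wtake hp i) hW3 ?_
    intro a hap haw
    obtain ⟨k, hk, hkv⟩ := (mem_support_wtake_iff p i hil).mp hap
    rw [Walk.support_cons, List.mem_cons] at haw
    rcases haw with h | h
    · exact h
    · exfalso
      rw [Walk.mem_support_append_iff] at h
      rcases h with h | h
      · exact hHs _ (hrH _ h) (hkv ▸ hgm k)
      · rw [Walk.support_cons, List.mem_cons] at h
        rcases h with h | h
        · exact hHs u' hu' (h ▸ hkv ▸ hgm k)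
        · obtain ⟨m, hm1, hm2, hm3⟩ := hTmem _ h
          have := getVert_inj hp hm2 (by omega : k ≤ p.length) (by rw [hm3, hkv])
          omega
  · rw [Walk.length_append, Walk.length_cons, Walk.length_append, Walk.length_cons,
      length_wtake p i hil, length_drop]
    omega

lemma case2 {x y : V} (p : G.Walk x y) (hp : p.IsPath)
    (H : Set V) (hH : IsCompOutside G {v | v ∈ p.support} H)
    (i j : ℕ) (hij : i + 1 < j) (hj : j < p.length)
    (hsi : ∃ u ∈ H, G.Adj u (p.getVert i)) (hsj : ∃ u ∈ H, G.Adj u (p.getVert j))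
    (hadj : G.Adj (p.getVert (i + 1)) (p.getVert (j + 1))) :
    ∃ q : G.Walk x y, q.IsPath ∧ p.length < q.length := by
  obtain ⟨u, hu, hadju⟩ := hsi
  obtain ⟨u', hu', hadju'⟩ := hsj
  obtain ⟨-, hdisj, hconn, -⟩ := hH
  have hHs : ∀ a ∈ H, a ∉ p.support := fun a ha => Set.disjoint_left.mp hdisj ha
  obtain ⟨r, hr, hrH⟩ := exists_path_in H hconn hu hu'
  have hil : i ≤ p.length := by omega
  have hjl : j ≤ p.length := by omega
  have hgm : ∀ k, p.getVert k ∈ p.support := getVert_mem_support p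
  -- middle piece M : from getVert j down to getVert (i+1)
  set M0 : G.Walk (p.getVert (i + 1)) (p.getVert j) :=
    ((wtake p j).drop (i + 1)).copy (getVert_wtake p j (i + 1) (by omega)) rfl with hM0
  set M : G.Walk (p.getVert j) (p.getVert (i + 1)) := M0.reverse with hM
  have hMpath : M.IsPath := by
    rw [hM, Walk.isPath_reverse_iff, hM0, Walk.isPath_copy]
    exact isPath_drop (isPath_wtake hp j) (i + 1)
  have hMlen : M.length = j - (i + 1) := by
    rw [hM, Walk.length_reverse, hM0, Walk.length_copy, length_drop, length_wtake p j hjl]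
  have hMmem : ∀ a ∈ M.support, ∃ k, i + 1 ≤ k ∧ k ≤ j ∧ p.getVert k = a := by
    intro a ha
    rw [hM, Walk.support_reverse, List.mem_reverse, hM0, Walk.support_copy] at ha
    have hlen : i + 1 ≤ (wtake p j).length := by rw [length_wtake p j hjl]; omega
    obtain ⟨k, hk1, hk2, hk3⟩ := (mem_support_drop_iff (wtake p j) (i + 1) hlen).mp ha
    rw [length_wtake p j hjl] at hk2
    exact ⟨k, hk1, hk2, by rw [← getVert_wtake p j k hk2]; exact hk3⟩
  -- T' = p.drop (j+1)
  set T : G.Walk (p.getVert (j + 1)) y := p.drop (j + 1) with hTd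
  have hTmem : ∀ a ∈ T.support, ∃ k, j + 1 ≤ k ∧ k ≤ p.length ∧ p.getVert k = a :=
    fun a ha => (mem_support_drop_iff p (j + 1) (by omega)).mp ha
  -- W0 = cons hadj T : from getVert (i+1) to y
  have hW0 : (Walk.cons hadj T).IsPath := by
    rw [Walk.cons_isPath_iff]
    refine ⟨isPath_drop hp _, fun h => ?_⟩
    obtain ⟨k, hk1, hk2, hk3⟩ := hTmem _ h
    have := getVert_inj hp hk2 (by omega : i + 1 ≤ p.length) hk3
    omega
  -- Z = M.append W0 : from getVert j to y
  set Z : G.Walk (p.getVert j) y := M.append (Walk.cons hadj T) with hZ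
  have hZpath : Z.IsPath := by
    refine append_isPath hMpath hW0 ?_
    intro a haM haw
    rw [Walk.support_cons, List.mem_cons] at haw
    rcases haw with h | h
    · exact h
    · exfalso
      obtain ⟨k, hk1, hk2, hk3⟩ := hMmem _ haM
      obtain ⟨m, hm1, hm2, hm3⟩ := hTmem _ h
      have := getVert_inj hp (by omega : k ≤ p.length) hm2 (by rw [hk3, hm3])
      omega
  have hZmem : ∀ a ∈ Z.support, ∃ k, i + 1 ≤ k ∧ k ≤ p.length ∧ p.getVert k = a := by
    intro a ha
    rw [hZ, Walk.mem_support_append_iff] at ha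
    rcases ha with h | h
    · obtain ⟨k, hk1, hk2, hk3⟩ := hMmem _ h
      exact ⟨k, hk1, by omega, hk3⟩
    · rw [Walk.support_cons, List.mem_cons] at h
      rcases h with h | h
      · exact ⟨i + 1, le_rfl, by omega, h.symm⟩
      · obtain ⟨k, hk1, hk2, hk3⟩ := hTmem _ h
        exact ⟨k, by omega, hk2, hk3⟩
  have hZlen : Z.length = p.length - i - 1 := by
    rw [hZ, Walk.length_append, Walk.length_cons, hMlen, hTd, length_drop]
    omega
  -- W1 = cons hadju' Z
  have hW1 : (Walk.cons hadju' Z).IsPath := by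
    rw [Walk.cons_isPath_iff]
    refine ⟨hZpath, fun h => ?_⟩
    obtain ⟨k, _, _, hk3⟩ := hZmem _ h
    exact hHs u' hu' (hk3 ▸ hgm k)
  -- W2 = r.append W1
  have hW2 : (r.append (Walk.cons hadju' Z)).IsPath := by
    refine append_isPath hr hW1 ?_
    intro a har haw
    rw [Walk.support_cons, List.mem_cons] at haw
    rcases haw with h | h
    · exact h
    · exfalso
      obtain ⟨k, _, _, hk3⟩ := hZmem _ h
      exact hHs a (hrH a har) (hk3 ▸ hgm k)
  -- W3 = cons hadju.symm W2
  have hW3 : (Walk.cons hadju.symm (r.append (Walk.cons hadju' Z))).IsPath := by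
    rw [Walk.cons_isPath_iff]
    refine ⟨hW2, fun h => ?_⟩
    rw [Walk.mem_support_append_iff] at h
    rcases h with h | h
    · exact hHs _ (hrH _ h) (hgm i)
    · rw [Walk.support_cons, List.mem_cons] at h
      rcases h with h | h
      · exact hHs u' hu' (h ▸ hgm i)
      · obtain ⟨k, hk1, hk2, hk3⟩ := hZmem _ h
        have := getVert_inj hp hk2 hil hk3
        omega
  refine ⟨(wtake p i).append (Walk.cons hadju.symm (r.append (Walk.cons hadju' Z))), ?_, ?_⟩
  · refine append_isPath (isPath_wtake hp i) hW3 ?_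
    intro a hap haw
    obtain ⟨k, hk, hkv⟩ := (mem_support_wtake_iff p i hil).mp hap
    rw [Walk.support_cons, List.mem_cons] at haw
    rcases haw with h | h
    · exact h
    · exfalso
      rw [Walk.mem_support_append_iff] at h
      rcases h with h | h
      · exact hHs _ (hrH _ h) (hkv ▸ hgm k)
      · rw [Walk.support_cons, List.mem_cons] at h
        rcases h with h | h
        · exact hHs u' hu' (h ▸ hkv ▸ hgm k)
        · obtain ⟨m, hm1, hm2, hm3⟩ := hZmem _ h
          have := getVert_inj hp hm2 (by omega : k ≤ p.length) (by rw [hm3, hkv])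
          omega
  · rw [Walk.length_append, Walk.length_cons, Walk.length_append, Walk.length_cons,
      length_wtake p i hil, hZlen]
    omega


end Aux

/-- attachment points `s = p.getVert i` and `s' = p.getVert j` of a component `H`
of `G - V(p)`.  (1) If they are consecutive on `p`, (2) if their successors are adjacent, or
(3) if their predecessors are adjacent, then there is a longer `xy`-path. -/
theorem stmt4 (G : SimpleGraph V) {x y : V} (p : G.Walk x y) (hp : p.IsPath)
    (H : Set V) (hH : IsCompOutside G {v | v ∈ p.support} H)
    (i j : ℕ) (hij : i < j) (hj : j ≤ p.length)
    (hsi : ∃ u ∈ H, G.Adj u (p.getVert i)) (hsj : ∃ u ∈ H, G.Adj u (p.getVert j)) :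
    (j = i + 1 → ∃ q : G.Walk x y, q.IsPath ∧ p.length < q.length) ∧
    (i + 1 < j → j < p.length → G.Adj (p.getVert (i + 1)) (p.getVert (j + 1)) →
      ∃ q : G.Walk x y, q.IsPath ∧ p.length < q.length) ∧
    (i + 1 < j → 0 < i → G.Adj (p.getVert (i - 1)) (p.getVert (j - 1)) →
      ∃ q : G.Walk x y, q.IsPath ∧ p.length < q.length) := by
  refine ⟨?_, ?_, ?_⟩
  · intro h1
    subst h1
    exact case1 p hp H hH i hj hsi hsj
  · intro h1 h2 hadj
    exact case2 p hp H hH i j h1 h2 hsi hsj hadj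
  · intro h1 h2 hadj
    have hset : {v : V | v ∈ p.reverse.support} = {v | v ∈ p.support} := by
      ext a; simp [Walk.support_reverse]
    have hH' : IsCompOutside G {v | v ∈ p.reverse.support} H := by rw [hset]; exact hH
    set L := p.length with hLdef
    have hrev : p.reverse.length = L := Walk.length_reverse p
    have hi' : (L - j) + 1 < L - i := by omega
    have hj' : L - i < p.reverse.length := by rw [hrev]; omega
    have e1 : p.reverse.getVert (L - j) = p.getVert j := by
      rw [Walk.getVert_reverse]; congr 1; omega
    have e2 : p.reverse.getVert (L - i) = p.getVert i := by
      rw [Walk.getVert_reverse]; congr 1; omega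
    have e3 : p.reverse.getVert ((L - j) + 1) = p.getVert (j - 1) := by
      rw [Walk.getVert_reverse]; congr 1; omega
    have e4 : p.reverse.getVert ((L - i) + 1) = p.getVert (i - 1) := by
      rw [Walk.getVert_reverse]; congr 1; omega
    obtain ⟨q, hq, hlen⟩ := case2 p.reverse hp.reverse H hH' (L - j) (L - i) hi' hj'
      (by rw [e1]; exact hsj) (by rw [e2]; exact hsi)
      (by rw [e3, e4]; exact hadj.symm)
    refine ⟨q.reverse, hq.reverse, ?_⟩
    rw [hrev] at hlen
    rw [Walk.length_reverse]
    exact hlen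


end GallaiFormal
end

section
/- Let P be a path in a graph G with endpoints x and y, let H be a component of G - V(P), and let k be the number of attachment points of H on P. Then there is an independent set A of G with A ⊆ V(P), such that no edge of G joins a vertex of A and a vertex of H, and: (1) if P is an xy-fiber, then A ⊆ V(P) - {x,y} and |A| ≥ k - 1; (2) if P is an x-fiber, then A ⊆ V(P) - {x} and |A| ≥ k; (3) if P is a longest path of G, then |A| ≥ k + 1. -/
open SimpleGraph

namespace GallaiFormal

variable {V : Type}

section GallaiAux

set_option linter.unusedSectionVars false

variable {G : SimpleGraph V}


lemma getVert_mem_support_s5 {a b : V} (q : G.Walk a b) {i : ℕ} (hi : i ≤ q.length) :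
    q.getVert i ∈ q.support :=
  Walk.mem_support_iff_exists_getVert.2 ⟨i, rfl, hi⟩

lemma getVert_injOn {a b : V} {q : G.Walk a b} (hq : q.IsPath) {i j : ℕ}
    (hi : i ≤ q.length) (hj : j ≤ q.length) (h : q.getVert i = q.getVert j) : i = j := by
  induction q generalizing i j with
  | nil => simp only [Walk.length_nil, Nat.le_zero] at hi hj; omega
  | @cons a c b hadj r ih =>
    rw [Walk.cons_isPath_iff] at hq
    match i, j with
    | 0, 0 => rfl
    | 0, j+1 =>
      exfalso
      apply hq.2
      rw [Walk.getVert_zero, Walk.getVert_cons_succ] at h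
      rw [h]
      exact getVert_mem_support_s5 r (by simpa [Nat.succ_le_succ_iff] using hj)
    | i+1, 0 =>
      exfalso
      apply hq.2
      rw [Walk.getVert_zero, Walk.getVert_cons_succ] at h
      rw [← h]
      exact getVert_mem_support_s5 r (by simpa [Nat.succ_le_succ_iff] using hi)
    | i+1, j+1 =>
      simp only [Walk.getVert_cons_succ] at h
      have := ih hq.1 (by simpa [Nat.succ_le_succ_iff] using hi)
        (by simpa [Nat.succ_le_succ_iff] using hj) h
      omega

lemma getVert_ne {a b : V} {q : G.Walk a b} (hq : q.IsPath) {s t : ℕ}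
    (hs : s ≤ q.length) (ht : t ≤ q.length) (hst : s ≠ t) :
    q.getVert s ≠ q.getVert t := fun h => hst (getVert_injOn hq hs ht h)

lemma isPath_append {a b c : V} {q : G.Walk a b} {r : G.Walk b c} (hq : q.IsPath) (hr : r.IsPath)
    (h : ∀ v, v ∈ q.support → v ∈ r.support → v = b) : (q.append r).IsPath := by
  rw [Walk.isPath_def, Walk.support_append]
  refine List.Nodup.append hq.support_nodup (hr.support_nodup.sublist (List.tail_sublist _)) ?_
  intro v hv hv'
  have hb : v = b := h v hv (List.mem_of_mem_tail hv')
  subst hb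
  have := hr.support_nodup
  rw [Walk.support_eq_cons] at this
  exact (List.nodup_cons.1 this).1 hv'


section TakeDrop
variable [DecidableEq V]

lemma length_takeUntil {a b u : V} {q : G.Walk a b} (hq : q.IsPath) (h : u ∈ q.support)
    {i : ℕ} (hi : i ≤ q.length) (hu : q.getVert i = u) :
    (q.takeUntil u h).length = i := by
  have h1 : q.getVert (q.takeUntil u h).length = u := by
    have h2 := Walk.getVert_append (q.takeUntil u h) (q.dropUntil u h) ((q.takeUntil u h).length)
    rw [Walk.take_spec q h] at h2
    simpa using h2
  exact getVert_injOn hq (Walk.length_takeUntil_le q h) hi (h1.trans hu.symm)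

lemma getVert_takeUntil {a b u : V} {q : G.Walk a b} (hq : q.IsPath) (h : u ∈ q.support)
    {i : ℕ} (hi : i ≤ q.length) (hu : q.getVert i = u) {t : ℕ} (ht : t ≤ i) :
    (q.takeUntil u h).getVert t = q.getVert t := by
  have h2 := Walk.getVert_append (q.takeUntil u h) (q.dropUntil u h) t
  rw [Walk.take_spec q h, length_takeUntil hq h hi hu] at h2
  rw [h2]
  by_cases hlt : t < i
  · simp [hlt]
  · have hti : t = i := le_antisymm ht (not_lt.1 hlt)
    subst hti
    simp only [lt_self_iff_false, if_false, Nat.sub_self, Walk.getVert_zero]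
    have hlen := length_takeUntil hq h hi hu
    conv_lhs => rw [← hlen]
    rw [Walk.getVert_length]

lemma mem_support_takeUntil_iff {a b u : V} {q : G.Walk a b} (hq : q.IsPath) (h : u ∈ q.support)
    {i : ℕ} (hi : i ≤ q.length) (hu : q.getVert i = u) {v : V} :
    v ∈ (q.takeUntil u h).support ↔ ∃ t, t ≤ i ∧ q.getVert t = v := by
  rw [Walk.mem_support_iff_exists_getVert]
  constructor
  · rintro ⟨n, hn, hn'⟩
    rw [length_takeUntil hq h hi hu] at hn'
    exact ⟨n, hn', by rw [← getVert_takeUntil hq h hi hu hn']; exact hn⟩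
  · rintro ⟨t, ht, htv⟩
    refine ⟨t, ?_, by rw [length_takeUntil hq h hi hu]; exact ht⟩
    rw [getVert_takeUntil hq h hi hu ht]; exact htv

lemma length_dropUntil {a b u : V} {q : G.Walk a b} (hq : q.IsPath) (h : u ∈ q.support)
    {i : ℕ} (hi : i ≤ q.length) (hu : q.getVert i = u) :
    (q.dropUntil u h).length = q.length - i := by
  have := congr_arg Walk.length (Walk.take_spec q h)
  rw [Walk.length_append, length_takeUntil hq h hi hu] at this
  omega

lemma getVert_dropUntil {a b u : V} {q : G.Walk a b} (hq : q.IsPath) (h : u ∈ q.support)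
    {i : ℕ} (hi : i ≤ q.length) (hu : q.getVert i = u) (s : ℕ) :
    (q.dropUntil u h).getVert s = q.getVert (i + s) := by
  have h2 := Walk.getVert_append (q.takeUntil u h) (q.dropUntil u h) (i + s)
  rw [Walk.take_spec q h, length_takeUntil hq h hi hu] at h2
  rw [h2]
  simp

lemma mem_support_dropUntil_iff {a b u : V} {q : G.Walk a b} (hq : q.IsPath) (h : u ∈ q.support)
    {i : ℕ} (hi : i ≤ q.length) (hu : q.getVert i = u) {v : V} :
    v ∈ (q.dropUntil u h).support ↔ ∃ t, i ≤ t ∧ t ≤ q.length ∧ q.getVert t = v := by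
  rw [Walk.mem_support_iff_exists_getVert]
  constructor
  · rintro ⟨n, hn, hn'⟩
    rw [length_dropUntil hq h hi hu] at hn'
    exact ⟨i + n, by omega, by omega, by rw [← getVert_dropUntil hq h hi hu n]; exact hn⟩
  · rintro ⟨t, ht1, ht2, htv⟩
    refine ⟨t - i, ?_, by rw [length_dropUntil hq h hi hu]; omega⟩
    rw [getVert_dropUntil hq h hi hu]
    have : i + (t - i) = t := by omega
    rw [this]; exact htv

end TakeDrop

lemma exists_through_walk {H : Set V} (hcon : (G.induce H).Connected) {a b u u' : V}
    (hu : u ∈ H) (hu' : u' ∈ H) (ha : a ∉ H) (hb : b ∉ H) (hab : a ≠ b)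
    (hau : G.Adj a u) (hu'b : G.Adj u' b) :
    ∃ w : G.Walk a b, w.IsPath ∧ 2 ≤ w.length ∧
      ∀ v ∈ w.support, v = a ∨ v = b ∨ v ∈ H := by
  classical
  obtain ⟨q0⟩ := hcon.preconnected ⟨u, hu⟩ ⟨u', hu'⟩
  set q1 : G.Walk u u' := q0.bypass.map (Embedding.induce H).toHom with hq1
  have hq1path : q1.IsPath :=
    Walk.map_isPath_of_injective (fun s t hst => Subtype.val_injective hst) q0.bypass_isPath
  have hq1sup : ∀ v ∈ q1.support, v ∈ H := by
    intro v hv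
    have hv2 : v ∈ (q0.bypass.map (Embedding.induce H).toHom).support := hv
    rw [Walk.support_map, List.mem_map] at hv2
    obtain ⟨⟨w, hw⟩, -, rfl⟩ := hv2
    exact hw
  set e : G.Walk u' b := Walk.cons hu'b Walk.nil with he
  have hesup : e.support = [u', b] := rfl
  refine ⟨Walk.cons hau (q1.append e), ?_, ?_, ?_⟩
  · rw [Walk.cons_isPath_iff]
    constructor
    · apply isPath_append hq1path
      · rw [Walk.isPath_def, hesup]
        simp only [List.nodup_cons, List.mem_singleton, List.not_mem_nil, not_false_iff,
          List.nodup_nil, and_true]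
        exact fun h => hb (h ▸ hu')
      · intro v hv hv'
        rw [hesup] at hv'
        simp only [List.mem_cons, List.mem_singleton, List.not_mem_nil, or_false] at hv'
        rcases hv' with rfl | rfl
        · rfl
        · exact absurd (hq1sup _ hv) hb
    · rw [Walk.mem_support_append_iff]
      rintro (h | h)
      · exact ha (hq1sup a h)
      · rw [hesup] at h
        simp only [List.mem_cons, List.mem_singleton, List.not_mem_nil, or_false] at h
        rcases h with h | h
        · exact ha (h ▸ hu')
        · exact hab h
  · simp only [Walk.length_cons, Walk.length_append, he, Walk.length_nil]
    omega
  · intro v hv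
    rw [Walk.support_cons, List.mem_cons] at hv
    rcases hv with rfl | hv
    · exact Or.inl rfl
    · rw [Walk.mem_support_append_iff] at hv
      rcases hv with h | h
      · exact Or.inr (Or.inr (hq1sup v h))
      · rw [hesup] at h
        simp only [List.mem_cons, List.mem_singleton, List.not_mem_nil, or_false] at h
        rcases h with rfl | rfl
        · exact Or.inr (Or.inr hu')
        · exact Or.inr (Or.inl rfl)




section GallaiKeys
variable [DecidableEq V] {x y : V} {p : G.Walk x y} {H : Set V}

lemma comp_not_mem (hH : IsCompOutside G {v | v ∈ p.support} H) {v : V}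
    (hv : v ∈ p.support) : v ∉ H :=
  fun h => Set.disjoint_left.1 hH.2.1 h hv

lemma key1 (hp : p.IsPath) (hH : IsCompOutside G {v | v ∈ p.support} H)
    (hxy : ∀ q : G.Walk x y, q.IsPath → q.length ≤ p.length)
    {i : ℕ} (hi : i < p.length) (hS : p.getVert i ∈ attachSet G p H) :
    ∀ u' ∈ H, ¬ G.Adj (p.getVert (i + 1)) u' := by
  rintro u' hu' hadj
  obtain ⟨-, u, hu, hua⟩ := hS
  have hmi : p.getVert i ∈ p.support := getVert_mem_support_s5 p hi.le
  have hmi1 : p.getVert (i+1) ∈ p.support := getVert_mem_support_s5 p hi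
  have hai : p.getVert i ∉ H := comp_not_mem hH hmi
  have hai1 : p.getVert (i+1) ∉ H := comp_not_mem hH hmi1
  have hne : p.getVert i ≠ p.getVert (i+1) := getVert_ne hp hi.le hi (by omega)
  obtain ⟨w, hwp, hwlen, hwsup⟩ :=
    exists_through_walk hH.2.2.1 hu hu' hai hai1 hne hua.symm hadj.symm
  set T := p.takeUntil (p.getVert i) hmi with hT
  set D := p.dropUntil (p.getVert (i+1)) hmi1 with hD
  have hTlen : T.length = i := length_takeUntil hp hmi hi.le rfl
  have hDlen : D.length = p.length - (i+1) := length_dropUntil hp hmi1 hi rfl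
  have hTsup : ∀ v ∈ T.support, ∃ t, t ≤ i ∧ p.getVert t = v :=
    fun v hv => (mem_support_takeUntil_iff hp hmi hi.le rfl).1 hv
  have hDsup : ∀ v ∈ D.support, ∃ t, i+1 ≤ t ∧ t ≤ p.length ∧ p.getVert t = v :=
    fun v hv => (mem_support_dropUntil_iff hp hmi1 hi rfl).1 hv
  have hWD : (w.append D).IsPath := by
    refine isPath_append hwp (hp.dropUntil _) ?_
    intro v hv hv'
    obtain ⟨t, ht1, ht2, rfl⟩ := hDsup v hv'
    rcases hwsup _ hv with h | h | h
    · exact absurd (getVert_injOn hp ht2 hi.le h) (by omega)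
    · exact h
    · exact absurd h (comp_not_mem hH (getVert_mem_support_s5 p ht2))
  have hW : (T.append (w.append D)).IsPath := by
    refine isPath_append (hp.takeUntil _) hWD ?_
    intro v hv hv'
    obtain ⟨t, ht, rfl⟩ := hTsup v hv
    rw [Walk.mem_support_append_iff] at hv'
    rcases hv' with hv' | hv'
    · rcases hwsup _ hv' with h | h | h
      · exact h
      · exact absurd (getVert_injOn hp (le_trans ht hi.le) hi h) (by omega)
      · exact absurd h (comp_not_mem hH (getVert_mem_support_s5 p (le_trans ht hi.le)))
    · obtain ⟨s, hs1, hs2, hsv⟩ := hDsup _ hv'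
      exact absurd (getVert_injOn hp (le_trans ht hi.le) hs2 hsv.symm) (by omega)
  have hlen := hxy _ hW
  rw [Walk.length_append, Walk.length_append, hTlen, hDlen] at hlen
  omega


lemma key2 (hp : p.IsPath) (hH : IsCompOutside G {v | v ∈ p.support} H)
    (hxy : ∀ q : G.Walk x y, q.IsPath → q.length ≤ p.length)
    {i j : ℕ} (hij : i < j) (hj : j < p.length)
    (hSi : p.getVert i ∈ attachSet G p H) (hSj : p.getVert j ∈ attachSet G p H) :
    ¬ G.Adj (p.getVert (i+1)) (p.getVert (j+1)) := by
  intro hadj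
  obtain ⟨-, u, hu, hua⟩ := hSi
  obtain ⟨-, u', hu', hu'b⟩ := hSj
  have hiL : i ≤ p.length := by omega
  have hi1L : i + 1 ≤ p.length := by omega
  have hjL : j ≤ p.length := by omega
  have hj1L : j + 1 ≤ p.length := by omega
  have hmi : p.getVert i ∈ p.support := getVert_mem_support_s5 p hiL
  have hmi1 : p.getVert (i+1) ∈ p.support := getVert_mem_support_s5 p hi1L
  have hmj1 : p.getVert (j+1) ∈ p.support := getVert_mem_support_s5 p hj1L
  obtain ⟨w, hwp, hwlen, hwsup⟩ := exists_through_walk hH.2.2.1 hu hu'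
    (comp_not_mem hH hmi) (comp_not_mem hH (getVert_mem_support_s5 p hjL))
    (getVert_ne hp hiL hjL (by omega)) hua.symm hu'b
  set T := p.takeUntil (p.getVert i) hmi with hT
  have hTlen : T.length = i := length_takeUntil hp hmi hiL rfl
  set D1 := p.dropUntil (p.getVert (i+1)) hmi1 with hD1
  have hD1path : D1.IsPath := hp.dropUntil _
  have hD1len : D1.length = p.length - (i+1) := length_dropUntil hp hmi1 hi1L rfl
  have hD1get : ∀ s, D1.getVert s = p.getVert (i+1+s) := getVert_dropUntil hp hmi1 hi1L rfl
  have hmjD1 : p.getVert j ∈ D1.support := by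
    rw [mem_support_dropUntil_iff hp hmi1 hi1L rfl]
    exact ⟨j, by omega, hjL, rfl⟩
  set M := D1.takeUntil (p.getVert j) hmjD1 with hM
  have hMpath : M.IsPath := hD1path.takeUntil _
  have hMidx : D1.getVert (j - (i+1)) = p.getVert j := by rw [hD1get]; congr 1; omega
  have hjD1L : j - (i+1) ≤ D1.length := by rw [hD1len]; omega
  have hMlen : M.length = j - (i+1) := length_takeUntil hD1path hmjD1 hjD1L hMidx
  have hMsup : ∀ v ∈ M.support, ∃ t, i+1 ≤ t ∧ t ≤ j ∧ p.getVert t = v := by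
    intro v hv
    rw [mem_support_takeUntil_iff hD1path hmjD1 hjD1L hMidx] at hv
    obtain ⟨t, ht, htv⟩ := hv
    rw [hD1get] at htv
    exact ⟨i+1+t, by omega, by omega, htv⟩
  set D2 := p.dropUntil (p.getVert (j+1)) hmj1 with hD2
  have hD2len : D2.length = p.length - (j+1) := length_dropUntil hp hmj1 hj1L rfl
  have hD2sup : ∀ v ∈ D2.support, ∃ t, j+1 ≤ t ∧ t ≤ p.length ∧ p.getVert t = v :=
    fun v hv => (mem_support_dropUntil_iff hp hmj1 hj1L rfl).1 hv
  set Q3 : G.Walk (p.getVert (i+1)) y := Walk.cons hadj D2 with hQ3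
  have hQ3path : Q3.IsPath := by
    rw [hQ3, Walk.cons_isPath_iff]
    refine ⟨hp.dropUntil _, ?_⟩
    intro hmem
    obtain ⟨t, ht1, ht2, htv⟩ := hD2sup _ hmem
    exact absurd (getVert_injOn hp ht2 hi1L htv) (by omega)
  set Q2 : G.Walk (p.getVert j) y := M.reverse.append Q3 with hQ2
  have hQ2idx : ∀ v ∈ Q2.support, ∃ t, i+1 ≤ t ∧ t ≤ p.length ∧ p.getVert t = v := by
    intro v hv
    rw [hQ2, Walk.mem_support_append_iff] at hv
    rcases hv with h | h
    · rw [Walk.support_reverse, List.mem_reverse] at h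
      obtain ⟨t, ht1, ht2, htv⟩ := hMsup _ h
      exact ⟨t, ht1, by omega, htv⟩
    · rw [hQ3, Walk.support_cons, List.mem_cons] at h
      rcases h with rfl | h
      · exact ⟨i+1, le_refl _, hi1L, rfl⟩
      · obtain ⟨t, ht1, ht2, htv⟩ := hD2sup _ h
        exact ⟨t, by omega, ht2, htv⟩
  have hQ2path : Q2.IsPath := by
    refine isPath_append hMpath.reverse hQ3path ?_
    intro v hv hv'
    rw [Walk.support_reverse, List.mem_reverse] at hv
    obtain ⟨t, ht1, ht2, rfl⟩ := hMsup _ hv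
    rw [hQ3, Walk.support_cons, List.mem_cons] at hv'
    rcases hv' with h | h
    · exact h
    · obtain ⟨s, hs1, hs2, hsv⟩ := hD2sup _ h
      exact absurd (getVert_injOn hp (by omega) hs2 hsv.symm) (by omega)
  set Q1 : G.Walk (p.getVert i) y := w.append Q2 with hQ1
  have hQ1path : Q1.IsPath := by
    refine isPath_append hwp hQ2path ?_
    intro v hv hv'
    obtain ⟨t, ht1, ht2, rfl⟩ := hQ2idx _ hv'
    rcases hwsup _ hv with h | h | h
    · exact absurd (getVert_injOn hp ht2 hiL h) (by omega)
    · exact h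
    · exact absurd h (comp_not_mem hH (getVert_mem_support_s5 p ht2))
  have hW : (T.append Q1).IsPath := by
    refine isPath_append (hp.takeUntil _) hQ1path ?_
    intro v hv hv'
    obtain ⟨t, ht, rfl⟩ := (mem_support_takeUntil_iff hp hmi hiL rfl).1 hv
    rw [hQ1, Walk.mem_support_append_iff] at hv'
    rcases hv' with h | h
    · rcases hwsup _ h with h' | h' | h'
      · exact h'
      · exact absurd (getVert_injOn hp (by omega) hjL h') (by omega)
      · exact absurd h' (comp_not_mem hH (getVert_mem_support_s5 p (by omega)))
    · obtain ⟨s, hs1, hs2, hsv⟩ := hQ2idx _ h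
      exact absurd (getVert_injOn hp (by omega) hs2 hsv.symm) (by omega)
  have hlen := hxy _ hW
  have hlen2 : (T.append Q1).length =
      T.length + (w.length + (M.reverse.length + (D2.length + 1))) := by
    rw [Walk.length_append, Walk.length_append, hQ2, Walk.length_append, hQ3, Walk.length_cons]
  rw [hlen2, hTlen, Walk.length_reverse, hMlen, hD2len] at hlen
  omega

lemma key3 (hp : p.IsPath) (hH : IsCompOutside G {v | v ∈ p.support} H)
    (hx : ∀ (z : V) (q : G.Walk x z), q.IsPath → q.length ≤ p.length) :
    ∀ u ∈ H, ¬ G.Adj u y := by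
  intro u hu hadj
  have hyu : y ≠ u := fun h => comp_not_mem hH (Walk.end_mem_support p) (h ▸ hu)
  have hcons : (Walk.cons hadj.symm (Walk.nil : G.Walk u u)).IsPath := by
    rw [Walk.cons_isPath_iff]
    exact ⟨Walk.IsPath.nil, by simpa using hyu⟩
  have hW : (p.append (Walk.cons hadj.symm Walk.nil)).IsPath := by
    refine isPath_append hp hcons ?_
    intro v hv hv'
    simp only [Walk.support_cons, Walk.support_nil, List.mem_cons, List.mem_singleton,
      List.not_mem_nil, or_false] at hv'
    rcases hv' with rfl | rfl
    · rfl
    · exact absurd hu (comp_not_mem hH hv)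
  have := hx u _ hW
  rw [Walk.length_append, Walk.length_cons, Walk.length_nil] at this
  omega

lemma key4 (hp : p.IsPath) (hH : IsCompOutside G {v | v ∈ p.support} H)
    (hall : ∀ ⦃a b : V⦄ (q : G.Walk a b), q.IsPath → q.length ≤ p.length) :
    ∀ u ∈ H, ¬ G.Adj u x := by
  intro u hu hadj
  have hW : (Walk.cons hadj p).IsPath := hp.cons (fun h => comp_not_mem hH h hu)
  have := hall _ hW
  rw [Walk.length_cons] at this
  omega

lemma key5 (hp : p.IsPath) (hH : IsCompOutside G {v | v ∈ p.support} H)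
    (hall : ∀ ⦃a b : V⦄ (q : G.Walk a b), q.IsPath → q.length ≤ p.length)
    {i : ℕ} (hi : i < p.length) (hS : p.getVert i ∈ attachSet G p H) :
    ¬ G.Adj x (p.getVert (i+1)) := by
  intro hadj
  obtain ⟨-, u, hu, hua⟩ := hS
  have hmi : p.getVert i ∈ p.support := getVert_mem_support_s5 p hi.le
  have hmi1 : p.getVert (i+1) ∈ p.support := getVert_mem_support_s5 p hi
  set T := p.takeUntil (p.getVert i) hmi with hT
  have hTlen : T.length = i := length_takeUntil hp hmi hi.le rfl
  set D := p.dropUntil (p.getVert (i+1)) hmi1 with hD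
  have hDlen : D.length = p.length - (i+1) := length_dropUntil hp hmi1 hi rfl
  have hDsup : ∀ v ∈ D.support, ∃ t, i+1 ≤ t ∧ t ≤ p.length ∧ p.getVert t = v :=
    fun v hv => (mem_support_dropUntil_iff hp hmi1 hi rfl).1 hv
  set Q3 : G.Walk x y := Walk.cons hadj D with hQ3
  have hQ3path : Q3.IsPath := by
    rw [hQ3, Walk.cons_isPath_iff]
    refine ⟨hp.dropUntil _, ?_⟩
    intro hmem
    obtain ⟨t, ht1, ht2, htv⟩ := hDsup _ hmem
    have h0 : p.getVert t = p.getVert 0 := htv.trans (Walk.getVert_zero p).symm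
    exact absurd (getVert_injOn hp ht2 (by omega) h0) (by omega)
  set Q2 : G.Walk (p.getVert i) y := T.reverse.append Q3 with hQ2
  have hQ2path : Q2.IsPath := by
    refine isPath_append (hp.takeUntil _).reverse hQ3path ?_
    intro v hv hv'
    rw [Walk.support_reverse, List.mem_reverse] at hv
    obtain ⟨t, ht, rfl⟩ := (mem_support_takeUntil_iff hp hmi hi.le rfl).1 hv
    rw [hQ3, Walk.support_cons, List.mem_cons] at hv'
    rcases hv' with h | h
    · exact h
    · obtain ⟨s, hs1, hs2, hsv⟩ := hDsup _ h
      exact absurd (getVert_injOn hp (by omega) hs2 hsv.symm) (by omega)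
  have hW : (Walk.cons hua Q2).IsPath := by
    refine hQ2path.cons ?_
    intro hmem
    rw [hQ2, Walk.mem_support_append_iff] at hmem
    rcases hmem with h | h
    · rw [Walk.support_reverse, List.mem_reverse] at h
      exact comp_not_mem hH (Walk.support_takeUntil_subset p hmi h) hu
    · rw [hQ3, Walk.support_cons, List.mem_cons] at h
      rcases h with rfl | h
      · exact comp_not_mem hH (Walk.start_mem_support p) hu
      · exact comp_not_mem hH (Walk.support_dropUntil_subset p hmi1 h) hu
  have := hall _ hW
  rw [Walk.length_cons, hQ2, Walk.length_append, Walk.length_reverse, hTlen, hQ3,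
    Walk.length_cons, hDlen] at this
  omega


end GallaiKeys

end GallaiAux

/-- independent sets of non-attachment points next to the `k` attachment points
of a component `H` of `G - V(p)`, with no edges to `H`: of size `≥ k-1` avoiding both ends if
`p` is an `xy`-fiber, `≥ k` avoiding `x` if `p` is an `x`-fiber, `≥ k+1` if `p` is longest. -/
theorem stmt5 (G : SimpleGraph V) {x y : V} (p : G.Walk x y) (hp : p.IsPath)
    (H : Set V) (hH : IsCompOutside G {v | v ∈ p.support} H)
    (k : ℕ) (hk : k = (attachSet G p H).ncard) :
    (IsFiberBetween G p → ∃ A : Set V, IsIndepSet G A ∧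
      A ⊆ {v | v ∈ p.support} \ {x, y} ∧ (∀ a ∈ A, ∀ u ∈ H, ¬ G.Adj a u) ∧ k - 1 ≤ A.ncard) ∧
    (IsEndFiber G p → ∃ A : Set V, IsIndepSet G A ∧
      A ⊆ {v | v ∈ p.support} \ {x} ∧ (∀ a ∈ A, ∀ u ∈ H, ¬ G.Adj a u) ∧ k ≤ A.ncard) ∧
    (IsLongestPath G p → ∃ A : Set V, IsIndepSet G A ∧
      A ⊆ {v | v ∈ p.support} ∧ (∀ a ∈ A, ∀ u ∈ H, ¬ G.Adj a u) ∧ k + 1 ≤ A.ncard) := by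
  classical
  set S := attachSet G p H with hSdef
  set F : Finset ℕ := (Finset.range (p.length + 1)).filter (fun i => p.getVert i ∈ S) with hFdef
  have hFmem : ∀ i, i ∈ F ↔ i ≤ p.length ∧ p.getVert i ∈ S := by
    intro i; rw [hFdef]; simp [Nat.lt_succ_iff]
  have hgetinj : ∀ {i j}, i ≤ p.length → j ≤ p.length → p.getVert i = p.getVert j → i = j :=
    fun hi hj h => getVert_injOn hp hi hj h
  have hScard : S.ncard = F.card := by
    have hSeq : S = ↑(F.image p.getVert) := by
      ext v
      simp only [Finset.coe_image, Set.mem_image, Finset.mem_coe]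
      constructor
      · intro hv
        obtain ⟨n, hn, hnl⟩ := Walk.mem_support_iff_exists_getVert.1 hv.1
        exact ⟨n, (hFmem n).2 ⟨hnl, hn ▸ hv⟩, hn⟩
      · rintro ⟨i, hi, rfl⟩
        exact ((hFmem i).1 hi).2
    rw [hSeq, Set.ncard_coe_finset]
    exact Finset.card_image_of_injOn
      (fun i hi j hj h => hgetinj ((hFmem i).1 hi).1 ((hFmem j).1 hj).1 h)
  refine ⟨?_, ?_, ?_⟩
  · -- Case 1 : xy-fiber
    intro hfib
    have hxy := hfib.2
    by_cases hFne : F.Nonempty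
    · set m := F.max' hFne with hm
      have hmF : m ∈ F := F.max'_mem hFne
      have hmL : m ≤ p.length := ((hFmem m).1 hmF).1
      have hlt : ∀ i ∈ F.erase m, i < m := fun i hi =>
        lt_of_le_of_ne (F.le_max' i (Finset.mem_of_mem_erase hi)) (Finset.ne_of_mem_erase hi)
      refine ⟨↑((F.erase m).image (fun i => p.getVert (i+1))), ?_, ?_, ?_, ?_⟩
      · intro a ha b hb hab hAdj
        simp only [Finset.coe_image, Set.mem_image, Finset.mem_coe] at ha hb
        obtain ⟨i, hi, rfl⟩ := ha
        obtain ⟨j, hj, rfl⟩ := hb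
        have hij : i ≠ j := fun h => hab (by rw [h])
        have hiS := ((hFmem i).1 (Finset.mem_of_mem_erase hi)).2
        have hjS := ((hFmem j).1 (Finset.mem_of_mem_erase hj)).2
        rcases hij.lt_or_gt with h | h
        · exact key2 hp hH hxy h (by have := hlt j hj; omega) hiS hjS hAdj
        · exact key2 hp hH hxy h (by have := hlt i hi; omega) hjS hiS hAdj.symm
      · rintro v hv
        simp only [Finset.coe_image, Set.mem_image, Finset.mem_coe] at hv
        obtain ⟨i, hi, rfl⟩ := hv
        have hiF := Finset.mem_of_mem_erase hi
        have him := hlt i hi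
        have hiL : i < p.length := by omega
        refine ⟨getVert_mem_support_s5 p (show i+1 ≤ p.length by omega), ?_⟩
        simp only [Set.mem_insert_iff, Set.mem_singleton_iff]
        push_neg
        constructor
        · intro hxv
          have h0 : p.getVert (i+1) = p.getVert 0 := by rw [hxv, Walk.getVert_zero]
          exact absurd (hgetinj (by omega) (by omega) h0) (by omega)
        · intro hyv
          have hiL1 : i + 1 = p.length := by
            have h0 : p.getVert (i+1) = p.getVert p.length := by rw [hyv, Walk.getVert_length]
            exact hgetinj (by omega) (le_refl _) h0
          have hmLeq : m = p.length := by omega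
          have hSm := ((hFmem m).1 hmF).2
          rw [hmLeq] at hSm
          obtain ⟨-, u, hu, hadj⟩ := hSm
          have h1 := key1 hp hH hxy hiL ((hFmem i).1 hiF).2 u hu
          rw [hyv] at h1
          have h2 : p.getVert p.length = y := Walk.getVert_length p
          rw [h2] at hadj
          exact h1 hadj.symm
      · intro a ha u hu
        simp only [Finset.coe_image, Set.mem_image, Finset.mem_coe] at ha
        obtain ⟨i, hi, rfl⟩ := ha
        exact key1 hp hH hxy (by have := hlt i hi; omega)
          ((hFmem i).1 (Finset.mem_of_mem_erase hi)).2 u hu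
      · have hinjOn : Set.InjOn (fun i => p.getVert (i+1)) ↑(F.erase m) := by
          intro i hi j hj h
          simp only [Finset.mem_coe] at hi hj
          exact Nat.succ_injective
            (hgetinj (by have := hlt i hi; omega) (by have := hlt j hj; omega) h)
        rw [Set.ncard_coe_finset, Finset.card_image_of_injOn hinjOn,
          Finset.card_erase_of_mem hmF, hk, hScard]
    · refine ⟨∅, by simp [IsIndepSet], by simp, by simp, ?_⟩
      have hFe : F = ∅ := Finset.not_nonempty_iff_eq_empty.1 hFne
      rw [hk, hScard, hFe]
      simp
  · -- Case 2 : x-fiber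
    intro hend
    have hxy : ∀ q : G.Walk x y, q.IsPath → q.length ≤ p.length := fun q hq => hend.2 y q hq
    have hyS : ∀ u ∈ H, ¬ G.Adj u y := key3 hp hH hend.2
    have hFlt : ∀ i ∈ F, i < p.length := by
      intro i hi
      obtain ⟨hil, hiS⟩ := (hFmem i).1 hi
      rcases lt_or_eq_of_le hil with h | h
      · exact h
      · exfalso
        obtain ⟨-, u, hu, hadj⟩ := hiS
        have h2 : p.getVert i = y := by rw [h, Walk.getVert_length]
        rw [h2] at hadj
        exact hyS u hu hadj
    refine ⟨↑(F.image (fun i => p.getVert (i+1))), ?_, ?_, ?_, ?_⟩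
    · intro a ha b hb hab hAdj
      simp only [Finset.coe_image, Set.mem_image, Finset.mem_coe] at ha hb
      obtain ⟨i, hi, rfl⟩ := ha
      obtain ⟨j, hj, rfl⟩ := hb
      have hij : i ≠ j := fun h => hab (by rw [h])
      have hiS := ((hFmem i).1 hi).2
      have hjS := ((hFmem j).1 hj).2
      rcases hij.lt_or_gt with h | h
      · exact key2 hp hH hxy h (hFlt j hj) hiS hjS hAdj
      · exact key2 hp hH hxy h (hFlt i hi) hjS hiS hAdj.symm
    · rintro v hv
      simp only [Finset.coe_image, Set.mem_image, Finset.mem_coe] at hv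
      obtain ⟨i, hi, rfl⟩ := hv
      have hiL := hFlt i hi
      refine ⟨getVert_mem_support_s5 p (show i+1 ≤ p.length by omega), ?_⟩
      simp only [Set.mem_singleton_iff]
      intro hxv
      have h0 : p.getVert (i+1) = p.getVert 0 := by rw [hxv, Walk.getVert_zero]
      exact absurd (hgetinj (by omega) (by omega) h0) (by omega)
    · intro a ha u hu
      simp only [Finset.coe_image, Set.mem_image, Finset.mem_coe] at ha
      obtain ⟨i, hi, rfl⟩ := ha
      exact key1 hp hH hxy (hFlt i hi) ((hFmem i).1 hi).2 u hu
    · have hinjOn : Set.InjOn (fun i => p.getVert (i+1)) ↑F := by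
        intro i hi j hj h
        simp only [Finset.mem_coe] at hi hj
        exact Nat.succ_injective
          (hgetinj (by have := hFlt i hi; omega) (by have := hFlt j hj; omega) h)
      rw [Set.ncard_coe_finset, Finset.card_image_of_injOn hinjOn, hk, hScard]
  · -- Case 3 : longest path
    intro hlong
    have hall := hlong.2
    have hxy : ∀ q : G.Walk x y, q.IsPath → q.length ≤ p.length := fun q hq => hall q hq
    have hyS : ∀ u ∈ H, ¬ G.Adj u y := key3 hp hH (fun z q hq => hall q hq)
    have hxS : ∀ u ∈ H, ¬ G.Adj u x := key4 hp hH hall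
    have hFlt : ∀ i ∈ F, i < p.length := by
      intro i hi
      obtain ⟨hil, hiS⟩ := (hFmem i).1 hi
      rcases lt_or_eq_of_le hil with h | h
      · exact h
      · exfalso
        obtain ⟨-, u, hu, hadj⟩ := hiS
        have h2 : p.getVert i = y := by rw [h, Walk.getVert_length]
        rw [h2] at hadj
        exact hyS u hu hadj
    have hxnotmem : x ∉ F.image (fun i => p.getVert (i+1)) := by
      rw [Finset.mem_image]
      rintro ⟨i, hi, hiv⟩
      have h0 : p.getVert (i+1) = p.getVert 0 := by rw [hiv, Walk.getVert_zero]
      exact absurd (hgetinj (by have := hFlt i hi; omega) (by omega) h0) (by omega)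
    refine ⟨↑(insert x (F.image (fun i => p.getVert (i+1)))), ?_, ?_, ?_, ?_⟩
    · intro a ha b hb hab hAdj
      simp only [Finset.coe_insert, Set.mem_insert_iff, Finset.coe_image, Set.mem_image,
        Finset.mem_coe] at ha hb
      rcases ha with rfl | ha
      · rcases hb with rfl | hb
        · exact hab rfl
        · obtain ⟨j, hj, rfl⟩ := hb
          exact key5 hp hH hall (hFlt j hj) ((hFmem j).1 hj).2 hAdj
      · obtain ⟨i, hi, rfl⟩ := ha
        rcases hb with rfl | hb
        · exact key5 hp hH hall (hFlt i hi) ((hFmem i).1 hi).2 hAdj.symm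
        · obtain ⟨j, hj, rfl⟩ := hb
          have hij : i ≠ j := fun h => hab (by rw [h])
          have hiS := ((hFmem i).1 hi).2
          have hjS := ((hFmem j).1 hj).2
          rcases hij.lt_or_gt with h | h
          · exact key2 hp hH hxy h (hFlt j hj) hiS hjS hAdj
          · exact key2 hp hH hxy h (hFlt i hi) hjS hiS hAdj.symm
    · rintro v hv
      simp only [Finset.coe_insert, Set.mem_insert_iff, Finset.coe_image, Set.mem_image,
        Finset.mem_coe] at hv
      rcases hv with rfl | hv
      · exact Walk.start_mem_support p
      · obtain ⟨i, hi, rfl⟩ := hv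
        exact getVert_mem_support_s5 p (show i+1 ≤ p.length by have := hFlt i hi; omega)
    · intro a ha u hu
      simp only [Finset.coe_insert, Set.mem_insert_iff, Finset.coe_image, Set.mem_image,
        Finset.mem_coe] at ha
      rcases ha with rfl | ha
      · exact fun h => hxS u hu h.symm
      · obtain ⟨i, hi, rfl⟩ := ha
        exact key1 hp hH hxy (hFlt i hi) ((hFmem i).1 hi).2 u hu
    · have hinjOn : Set.InjOn (fun i => p.getVert (i+1)) ↑F := by
        intro i hi j hj h
        simp only [Finset.mem_coe] at hi hj
        exact Nat.succ_injective
          (hgetinj (by have := hFlt i hi; omega) (by have := hFlt j hj; omega) h)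
      rw [Set.ncard_coe_finset, Finset.card_insert_of_notMem hxnotmem,
        Finset.card_image_of_injOn hinjOn, hk, hScard]


end GallaiFormal
end

section
/- If G is a connected (P_3 + P_1)-free graph, then every vertex of G of degree at least Δ(G) - 1 lies on every longest path of G (i.e., is a Gallai vertex). -/
open SimpleGraph

namespace GallaiFormal

variable {V : Type}

/-- `G` has no induced `P₃ + P₁`. -/
def NoP3P1 (G : SimpleGraph V) : Prop :=
  ∀ ⦃a b c d : V⦄, G.Adj a b → G.Adj b c → a ≠ c → ¬G.Adj a c →
    ¬G.Adj a d → ¬G.Adj b d → ¬G.Adj c d → False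

lemma isFree_noP3P1 (G : SimpleGraph V)
    (hfree : IsFree G (SimpleGraph.fromEdgeSet {s((0 : Fin 4), 1), s(1, 2)})) :
    NoP3P1 G := by
  intro a b c d hab hbc hac hnac hnad hnbd hncd
  have hbd : b ≠ d := fun h => hnad (h ▸ hab)
  have had : a ≠ d := fun h => hnbd (h ▸ hab.symm)
  have hcd : c ≠ d := fun h => hnbd (h ▸ hbc)
  have hinj : Function.Injective (![a, b, c, d]) := by
    intro i j hij
    fin_cases i <;> fin_cases j <;> simp_all <;>
      first
        | rfl
        | exact absurd hij hab.ne
        | exact absurd hij hab.ne.symm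
        | exact absurd hij hbc.ne
        | exact absurd hij hbc.ne.symm
        | exact absurd hij hac
        | exact absurd hij hac.symm
        | exact absurd hij had
        | exact absurd hij had.symm
        | exact absurd hij hbd
        | exact absurd hij hbd.symm
        | exact absurd hij hcd
        | exact absurd hij hcd.symm
  apply hfree
  refine ⟨Set.range ![a, b, c, d], ⟨⟨Equiv.ofInjective _ hinj, ?_⟩⟩⟩
  intro i j
  simp only [Equiv.ofInjective_apply, SimpleGraph.comap_adj, Function.Embedding.coe_subtype,
    SimpleGraph.fromEdgeSet_adj, Set.mem_insert_iff, Set.mem_singleton_iff]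
  fin_cases i <;> fin_cases j <;>
    simp_all [Sym2.eq, Sym2.rel_iff', hab.symm, hbc.symm] <;>
    first
      | exact fun h => hnac h
      | exact fun h => hnac h.symm
      | exact fun h => hnad h
      | exact fun h => hnad h.symm
      | exact fun h => hnbd h
      | exact fun h => hnbd h.symm
      | exact fun h => hncd h
      | exact fun h => hncd h.symm
      | exact G.irrefl
      | decide


/-- `u` misses (is nonadjacent to) at least two of the triple `v, a, b`. -/
def Misses2 (G : SimpleGraph V) (v a b u : V) : Prop :=
  (¬G.Adj u v ∧ ¬G.Adj u a) ∨ (¬G.Adj u v ∧ ¬G.Adj u b) ∨ (¬G.Adj u a ∧ ¬G.Adj u b)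

lemma Oa' {G : SimpleGraph V} (hP : NoP3P1 G) {t1 t2 t3 u : V}
    (h12 : ¬G.Adj t1 t2) (h13 : ¬G.Adj t1 t3) (h23 : ¬G.Adj t2 t3)
    (h23' : t2 ≠ t3) (hn : ¬G.Adj u t1) :
    ¬G.Adj u t2 ∨ ¬G.Adj u t3 := by
  by_contra h
  push_neg at h
  obtain ⟨h2, h3⟩ := h
  exact hP h2.symm h3 h23' h23 (fun hh => h12 hh.symm) hn (fun hh => h13 hh.symm)

section Olariu

variable {G : SimpleGraph V} {v a b : V}
  (hP : NoP3P1 G)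
  (hv0 : ¬G.Adj v a) (hvL : ¬G.Adj v b) (h0L : ¬G.Adj a b)
  (hv0' : v ≠ a) (hvL' : v ≠ b) (h0L' : a ≠ b)

include hP hv0 hvL h0L hv0' hvL' h0L'

omit hP hvL' hv0' in
lemma indep3 : ∀ y z, (y = v ∨ y = a ∨ y = b) → (z = v ∨ z = a ∨ z = b) → y ≠ z → ¬G.Adj y z := by
  intro y z hy hz hyz
  rcases hy with rfl | rfl | rfl <;> rcases hz with rfl | rfl | rfl <;>
    first
      | exact absurd rfl hyz
      | assumption
      | exact fun h => hv0 h.symm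
      | exact fun h => hvL h.symm
      | exact fun h => h0L h.symm

lemma H2' {u t : V} (ht : t = v ∨ t = a ∨ t = b) (hn : ¬G.Adj u t) : Misses2 G v a b u := by
  rcases ht with rfl | rfl | rfl
  · rcases Oa' hP hv0 hvL h0L h0L' hn with h | h
    · exact Or.inl ⟨hn, h⟩
    · exact Or.inr (Or.inl ⟨hn, h⟩)
  · rcases Oa' hP (fun h => hv0 h.symm) h0L hvL hvL' hn with h | h
    · exact Or.inl ⟨h, hn⟩
    · exact Or.inr (Or.inr ⟨hn, h⟩)
  · rcases Oa' hP (fun h => hvL h.symm) (fun h => h0L h.symm) hv0 hv0' hn with h | h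
    · exact Or.inr (Or.inl ⟨h, hn⟩)
    · exact Or.inr (Or.inr ⟨h, hn⟩)

lemma Ob' : ∀ {u w : V} (_ : Gᶜ.Walk u w), w = v →
    (u = v ∨ u = a ∨ u = b) ∨ Misses2 G v a b u := by
  intro u w W
  induction W with
  | nil => exact fun h => Or.inl (Or.inl h)
  | @cons u y _ hadj W ih =>
    intro hwv
    have ihy := ih hwv
    rw [compl_adj] at hadj
    obtain ⟨huy, hnuy⟩ := hadj
    by_cases hu : u = v ∨ u = a ∨ u = b
    · exact Or.inl hu
    right
    by_cases hy3 : y = v ∨ y = a ∨ y = b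
    · exact H2' hP hv0 hvL h0L hv0' hvL' h0L' hy3 hnuy
    have hM : Misses2 G v a b y := by
      rcases ihy with h | h
      · exact absurd h hy3
      · exact h
    rcases hM with ⟨m1, m2⟩ | ⟨m1, m2⟩ | ⟨m1, m2⟩
    · rcases Oa' hP m1 m2 hv0 hv0' hnuy with h | h
      · exact H2' hP hv0 hvL h0L hv0' hvL' h0L' (Or.inl rfl) h
      · exact H2' hP hv0 hvL h0L hv0' hvL' h0L' (Or.inr (Or.inl rfl)) h
    · rcases Oa' hP m1 m2 hvL hvL' hnuy with h | h
      · exact H2' hP hv0 hvL h0L hv0' hvL' h0L' (Or.inl rfl) h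
      · exact H2' hP hv0 hvL h0L hv0' hvL' h0L' (Or.inr (Or.inr rfl)) h
    · rcases Oa' hP m1 m2 h0L h0L' hnuy with h | h
      · exact H2' hP hv0 hvL h0L hv0' hvL' h0L' (Or.inr (Or.inl rfl)) h
      · exact H2' hP hv0 hvL h0L hv0' hvL' h0L' (Or.inr (Or.inr rfl)) h

omit hP hv0 hvL h0L hv0' hvL' h0L' in
lemma key_step (hP : NoP3P1 G) {t1 t2 bb aa : V}
    (h12 : ¬G.Adj t1 t2)
    (hb1 : ¬G.Adj bb t1) (hb2 : ¬G.Adj bb t2)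
    (hb1' : bb ≠ t1) (hb2' : bb ≠ t2)
    (hab : G.Adj aa bb)
    (hmiss : ¬G.Adj aa t1 ∨ ¬G.Adj aa t2) :
    ¬G.Adj aa t1 ∧ ¬G.Adj aa t2 := by
  rcases hmiss with h | h
  · refine ⟨h, ?_⟩
    rcases Oa' hP h12 (fun hh => hb1 hh.symm) (fun hh => hb2 hh.symm) (Ne.symm hb2') h with h' | h'
    · exact h'
    · exact absurd hab h'
  · refine ⟨?_, h⟩
    rcases Oa' hP (fun hh => h12 hh.symm) (fun hh => hb2 hh.symm) (fun hh => hb1 hh.symm)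
        (Ne.symm hb1') h with h' | h'
    · exact h'
    · exact absurd hab h'

/-- Transitivity of adjacency among vertices anticonnected to the independent triple. -/
lemma transA {s t r : V}
    (hOs : (s = v ∨ s = a ∨ s = b) ∨ Misses2 G v a b s)
    (hOt : (t = v ∨ t = a ∨ t = b) ∨ Misses2 G v a b t)
    (hOr : (r = v ∨ r = a ∨ r = b) ∨ Misses2 G v a b r)
    (hst : G.Adj s t) (htr : G.Adj t r) (hsr : s ≠ r) : G.Adj s r := by
  by_contra hn
  obtain ⟨t1, t2, ht1, ht2, h12', hb1, hb2, hbt1', hbt2'⟩ :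
      ∃ t1 t2, (t1 = v ∨ t1 = a ∨ t1 = b) ∧ (t2 = v ∨ t2 = a ∨ t2 = b) ∧ t1 ≠ t2 ∧
        ¬G.Adj t t1 ∧ ¬G.Adj t t2 ∧ t ≠ t1 ∧ t ≠ t2 := by
    by_cases h3 : t = v ∨ t = a ∨ t = b
    · rcases h3 with rfl | rfl | rfl
      · exact ⟨a, b, Or.inr (Or.inl rfl), Or.inr (Or.inr rfl), h0L', hv0, hvL, hv0', hvL'⟩
      · exact ⟨v, b, Or.inl rfl, Or.inr (Or.inr rfl), hvL', fun h => hv0 h.symm, h0L,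
          Ne.symm hv0', h0L'⟩
      · exact ⟨v, a, Or.inl rfl, Or.inr (Or.inl rfl), hv0', fun h => hvL h.symm,
          fun h => h0L h.symm, Ne.symm hvL', Ne.symm h0L'⟩
    · push_neg at h3
      obtain ⟨hn1, hn2, hn3⟩ := h3
      have hM : Misses2 G v a b t := by
        rcases hOt with h | h
        · exact absurd h (by push_neg; exact ⟨hn1, hn2, hn3⟩)
        · exact h
      rcases hM with ⟨m1, m2⟩ | ⟨m1, m2⟩ | ⟨m1, m2⟩
      · exact ⟨v, a, Or.inl rfl, Or.inr (Or.inl rfl), hv0', m1, m2, hn1, hn2⟩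
      · exact ⟨v, b, Or.inl rfl, Or.inr (Or.inr rfl), hvL', m1, m2, hn1, hn3⟩
      · exact ⟨a, b, Or.inr (Or.inl rfl), Or.inr (Or.inr rfl), h0L', m1, m2, hn2, hn3⟩
  have h12 : ¬G.Adj t1 t2 := indep3 hv0 hvL h0L h0L' t1 t2 ht1 ht2 h12'
  have hmiss : ∀ x : V, G.Adj x t →
      ((x = v ∨ x = a ∨ x = b) ∨ Misses2 G v a b x) → (¬G.Adj x t1 ∨ ¬G.Adj x t2) := by
    intro x hxt hOx
    rcases hOx with h3 | hM
    · have hx1 : x ≠ t1 := fun h => hb1 (h ▸ hxt).symm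
      exact Or.inl (indep3 hv0 hvL h0L h0L' x t1 h3 ht1 hx1)
    · rcases ht1 with rfl | rfl | rfl <;> rcases ht2 with rfl | rfl | rfl <;>
        rcases hM with ⟨m1, m2⟩ | ⟨m1, m2⟩ | ⟨m1, m2⟩ <;>
        first
          | exact absurd rfl h12'
          | exact Or.inl m1
          | exact Or.inl m2
          | exact Or.inr m1
          | exact Or.inr m2
  have hs12 := key_step hP h12 hb1 hb2 hbt1' hbt2' hst (hmiss s hst hOs)
  have hr12 := key_step hP h12 hb1 hb2 hbt1' hbt2' htr.symm (hmiss r htr.symm hOr)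
  exact hP hst htr hsr hn hs12.1 hb1 hr12.1

end Olariu


section WalkAux

variable {G : SimpleGraph V}

lemma walk_insert {v : V} :
    ∀ {a b : V} (p : G.Walk a b), p.IsPath → v ∉ p.support →
      ∀ i, i < p.length → G.Adj (p.getVert i) v → G.Adj v (p.getVert (i + 1)) →
      ∃ q : G.Walk a b, q.IsPath ∧ q.length = p.length + 1 ∧
        ∀ x ∈ q.support, x ∈ p.support ∨ x = v := by
  intro a b p
  induction p with
  | nil => intro _ _ i hi; simp at hi
  | @cons a c b hadj q ih =>
    intro hp hv i hi h1 h2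
    have hp' := (Walk.cons_isPath_iff hadj q).mp hp
    simp only [Walk.support_cons, List.mem_cons, not_or] at hv
    obtain ⟨hv1, hv2⟩ := hv
    cases i with
    | zero =>
      have h1' : G.Adj a v := by simpa using h1
      have h2' : G.Adj v c := by
        rw [Walk.getVert_cons_succ, Walk.getVert_zero] at h2; exact h2
      refine ⟨Walk.cons h1' (Walk.cons h2' q), ?_, ?_, ?_⟩
      · rw [Walk.cons_isPath_iff]
        refine ⟨(Walk.cons_isPath_iff h2' q).mpr ⟨hp'.1, hv2⟩, ?_⟩
        simp only [Walk.support_cons, List.mem_cons]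
        push_neg
        exact ⟨fun h => hv1 h.symm, fun h => hp'.2 h⟩
      · simp [Walk.length_cons]
      · intro x hx
        simp only [Walk.support_cons, List.mem_cons] at hx ⊢
        tauto
    | succ j =>
      have hj : j < q.length := by
        simpa [Walk.length_cons, Nat.succ_lt_succ_iff] using hi
      rw [Walk.getVert_cons_succ] at h1 h2
      obtain ⟨q', hq', hl', hs'⟩ := ih hp'.1 hv2 j hj h1 h2
      refine ⟨Walk.cons hadj q', ?_, ?_, ?_⟩
      · rw [Walk.cons_isPath_iff]
        refine ⟨hq', fun hmem => ?_⟩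
        rcases hs' a hmem with h | h
        · exact hp'.2 h
        · exact hv1 h.symm
      · simp [Walk.length_cons, hl']
      · intro x hx
        simp only [Walk.support_cons, List.mem_cons] at hx ⊢
        rcases hx with rfl | hx
        · exact Or.inl (Or.inl rfl)
        · rcases hs' x hx with h | h
          · exact Or.inl (Or.inr h)
          · exact Or.inr h

lemma walk_attach {x0 xL : V} (p : G.Walk x0 xL) :
    ∀ {c d : V} (_ : G.Walk c d), c ∉ p.support → d ∈ p.support →
      ∃ u w, u ∉ p.support ∧ w ∈ p.support ∧ G.Adj u w := by
  intro c d W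
  induction W with
  | nil => exact fun h hd => absurd hd h
  | @cons c y _ hadj W ih =>
    intro h hd
    by_cases hy : y ∈ p.support
    · exact ⟨c, y, h, hy, hadj⟩
    · exact ih hy hd

lemma walk_rotate [DecidableEq V] {x0 xL u w : V} (p : G.Walk x0 xL) (hp : p.IsPath)
    (hcyc : G.Adj xL x0) (hu : u ∉ p.support) (hw : w ∈ p.support) (hw0 : w ≠ x0)
    (huw : G.Adj u w) :
    ∃ (y : V) (q : G.Walk u y), q.IsPath ∧ q.length = p.length + 1 := by
  have hw0' : x0 ≠ w := Ne.symm hw0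
  obtain ⟨y, h1, r, hr⟩ := Walk.exists_eq_cons_of_ne hw0 (p.takeUntil w hw).reverse
  refine ⟨y, Walk.cons huw ((p.dropUntil w hw).append (Walk.cons hcyc r.reverse)), ?_, ?_⟩
  · -- IsPath
    have hsupp2 : (p.takeUntil w hw).support = r.support.reverse ++ [w] := by
      have h3 : (p.takeUntil w hw).support.reverse = w :: r.support := by
        rw [← Walk.support_reverse, hr, Walk.support_cons]
      have := congrArg List.reverse h3
      rw [List.reverse_reverse] at this
      simpa [List.reverse_cons] using this
    have hsupp : p.support = r.support.reverse ++ (p.dropUntil w hw).support := by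
      have h1' := congrArg Walk.support (p.take_spec hw)
      rw [Walk.support_append, hsupp2, List.append_assoc] at h1'
      rw [← h1']
      congr 1
      exact (Walk.support_eq_cons _).symm
    have hq : (Walk.cons huw ((p.dropUntil w hw).append (Walk.cons hcyc r.reverse))).support
        = u :: ((p.dropUntil w hw).support ++ r.support.reverse) := by
      rw [Walk.support_cons, Walk.support_append, Walk.support_cons]
      simp [Walk.support_reverse]
    rw [Walk.isPath_def, hq]
    have hperm : ((p.dropUntil w hw).support ++ r.support.reverse).Perm p.support := by
      rw [hsupp]
      exact List.perm_append_comm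
    refine List.nodup_cons.mpr ⟨fun hmem => hu (hperm.subset hmem), ?_⟩
    exact (hperm.nodup_iff).mpr hp.support_nodup
  · -- length
    have hlen : (p.takeUntil w hw).length + (p.dropUntil w hw).length = p.length := by
      have := congrArg Walk.length (p.take_spec hw)
      rwa [Walk.length_append] at this
    have hlt : (p.takeUntil w hw).length = r.length + 1 := by
      have := congrArg Walk.length hr
      rw [Walk.length_reverse, Walk.length_cons] at this
      omega
    simp only [Walk.length_cons, Walk.length_append, Walk.length_reverse]
    omega

lemma walk_count [DecidableEq V] (A : Set V) [DecidablePred (· ∈ A)] :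
    ∀ {a b : V} (p : G.Walk a b), p.IsPath → b ∈ A →
      (∀ i, i < p.length → p.getVert i ∈ A ∨ p.getVert (i + 1) ∈ A) →
      ((a ∈ A → (p.support.toFinset.filter (fun x => x ∉ A)).card + 1 ≤
          (p.support.toFinset.filter (fun x => x ∈ A)).card) ∧
       (a ∉ A → (p.support.toFinset.filter (fun x => x ∉ A)).card ≤
          (p.support.toFinset.filter (fun x => x ∈ A)).card)) := by
  intro a b p
  induction p with
  | nil =>
    intro _ hb _
    constructor
    · intro _
      simp [Walk.support_nil, Finset.filter_singleton, hb]
    · intro h; exact absurd hb h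
  | @cons a c b hadj q ih =>
    intro hp hb hno
    have hp' := (Walk.cons_isPath_iff hadj q).mp hp
    have ihq := ih hp'.1 hb (fun i hi => by
      have := hno (i + 1) (by simp [Walk.length_cons]; omega)
      simpa [Walk.getVert_cons_succ] using this)
    have hnotmem : a ∉ q.support.toFinset := by simpa using hp'.2
    have hsupp : (Walk.cons hadj q).support.toFinset = insert a q.support.toFinset := by
      simp [Walk.support_cons]
    constructor
    · intro ha
      have hkey : (q.support.toFinset.filter (fun x => x ∉ A)).card ≤
          (q.support.toFinset.filter (fun x => x ∈ A)).card := by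
        by_cases hc : c ∈ A
        · exact le_of_lt (Nat.lt_of_lt_of_le (Nat.lt_succ_self _) (ihq.1 hc))
        · exact ihq.2 hc
      rw [hsupp, Finset.filter_insert, Finset.filter_insert]
      simp only [ha, not_true_eq_false, if_false, if_true]
      rw [Finset.card_insert_of_notMem (fun h => hnotmem (Finset.mem_of_mem_filter _ h))]
      omega
    · intro ha
      have hc : c ∈ A := by
        have := hno 0 (by simp [Walk.length_cons])
        simp only [Walk.getVert_zero] at this
        rcases this with h | h
        · exact absurd h ha
        · rwa [Walk.getVert_cons_succ, Walk.getVert_zero] at h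
      have hkey := ihq.1 hc
      rw [hsupp, Finset.filter_insert, Finset.filter_insert]
      simp only [ha, not_false_eq_true, if_true, if_false]
      rw [Finset.card_insert_of_notMem (fun h => hnotmem (Finset.mem_of_mem_filter _ h))]
      omega

end WalkAux

/-- in a connected `(P₃ + P₁)`-free graph, every vertex of degree at least
`Δ(G) - 1` is a Gallai vertex. -/
theorem stmt6 [Fintype V] (G : SimpleGraph V) [DecidableRel G.Adj]
    (hconn : G.Connected)
    (hfree : IsFree G (SimpleGraph.fromEdgeSet {s((0 : Fin 4), 1), s(1, 2)}))
    (v : V) (hdeg : G.maxDegree - 1 ≤ G.degree v) :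
    IsGallaiVertex G v := by
  classical
  have hP : NoP3P1 G := isFree_noP3P1 G hfree
  intro a b p hp hmax
  by_contra hv
  obtain ⟨W⟩ := hconn.preconnected v a
  obtain ⟨u0, w0, hu0, hw0, huw0⟩ := walk_attach p W hv p.start_mem_support
  have hext0 : ∀ u, u ∉ p.support → ¬G.Adj u a := by
    intro u hu hadj
    have hq : (Walk.cons hadj p).IsPath := hp.cons hu
    have := hmax _ hq
    rw [Walk.length_cons] at this
    omega
  have hextL : ∀ u, u ∉ p.support → ¬G.Adj u b := by
    intro u hu hadj
    have hq : (Walk.cons hadj p.reverse).IsPath :=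
      hp.reverse.cons (by rw [Walk.support_reverse]; simpa using hu)
    have := hmax _ hq
    rw [Walk.length_cons, Walk.length_reverse] at this
    omega
  have hv0 : ¬G.Adj v a := hext0 v hv
  have hvL : ¬G.Adj v b := hextL v hv
  have hv0' : v ≠ a := fun h => hv (h ▸ p.start_mem_support)
  have hvL' : v ≠ b := fun h => hv (h ▸ p.end_mem_support)
  have hL1 : 1 ≤ p.length := by
    by_contra hL
    push_neg at hL
    have hw0a : w0 = a := by
      obtain ⟨n, hn, hnle⟩ := (Walk.mem_support_iff_exists_getVert).mp hw0
      have hn0 : n = 0 := by omega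
      rw [hn0, Walk.getVert_zero] at hn
      exact hn.symm
    exact hext0 u0 hu0 (hw0a ▸ huw0)
  have h0L' : a ≠ b := by
    intro h
    subst h
    rw [Walk.isPath_iff_eq_nil] at hp
    rw [hp] at hL1
    simp at hL1
  have h0L : ¬G.Adj a b := by
    intro hadj
    by_cases hwa : w0 = a
    · exact hext0 u0 hu0 (hwa ▸ huw0)
    · obtain ⟨y, q, hq, hql⟩ := walk_rotate p hp hadj.symm hu0 hw0 hwa huw0
      have := hmax q hq
      omega
  set A : Set V := {u | Gᶜ.Reachable v u} with hA
  have hvA : v ∈ A := by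
    show Gᶜ.Reachable v v
    exact Reachable.refl v
  have h0A : a ∈ A := by
    show Gᶜ.Reachable v a
    exact Adj.reachable ((G.compl_adj v a).mpr ⟨hv0', hv0⟩)
  have hLA : b ∈ A := by
    show Gᶜ.Reachable v b
    exact Adj.reachable ((G.compl_adj v b).mpr ⟨hvL', hvL⟩)
  have cross : ∀ {s t : V}, s ∈ A → t ∉ A → G.Adj s t := by
    intro s t hs ht
    by_contra hn
    have hst : s ≠ t := fun h => ht (h ▸ hs)
    have hs' : Gᶜ.Reachable v s := hs
    exact ht (hs'.trans (Adj.reachable ((G.compl_adj s t).mpr ⟨hst, hn⟩)))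
  have hOb : ∀ u, u ∈ A → (u = v ∨ u = a ∨ u = b) ∨ Misses2 G v a b u := by
    intro u hu
    have hu' : Gᶜ.Reachable v u := hu
    obtain ⟨W'⟩ := hu'
    exact Ob' hP hv0 hvL h0L hv0' hvL' h0L' W'.reverse rfl
  have htrans : ∀ s t r : V, s ∈ A → t ∈ A → r ∈ A →
      G.Adj s t → G.Adj t r → s ≠ r → G.Adj s r := by
    intro s t r hs ht hr h1 h2 h3
    exact transA hP hv0 hvL h0L hv0' hvL' h0L' (hOb s hs) (hOb t ht) (hOb r hr) h1 h2 h3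
  by_cases hBe : ∀ u : V, u ∈ A
  · have hAdjA : ∀ {c d : V} (_ : G.Walk c d), c = d ∨ G.Adj c d := by
      intro c d W'
      induction W' with
      | nil => exact Or.inl rfl
      | @cons c y d hadj W'' ih =>
        rcases ih with rfl | h
        · exact Or.inr hadj
        · by_cases hcd : c = d
          · exact Or.inl hcd
          · exact Or.inr (htrans c y d (hBe c) (hBe y) (hBe d) hadj h hcd)
    rcases hAdjA W with h | h
    · exact hv0' h
    · exact hv0 h
  push_neg at hBe
  obtain ⟨b0, hb0⟩ := hBe
  have hNvA_supp : ∀ u, u ∈ A → G.Adj v u → u ∉ p.support := by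
    intro u hu hadj hmem
    obtain ⟨n, hn, hnle⟩ := Walk.mem_support_iff_exists_getVert.mp hmem
    have hnlt : n < p.length := by
      rcases Nat.lt_or_ge n p.length with h | h
      · exact h
      · exfalso
        have hne : n = p.length := le_antisymm hnle h
        rw [hne, Walk.getVert_length] at hn
        exact hvL (by rw [hn]; exact hadj)
    have hadj2 := p.adj_getVert_succ hnlt
    rw [hn] at hadj2
    have hnext : G.Adj v (p.getVert (n + 1)) := by
      have hne : v ≠ p.getVert (n + 1) := by
        intro h
        exact hv (h ▸ Walk.mem_support_iff_exists_getVert.mpr ⟨n + 1, rfl, by omega⟩)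
      by_cases hnA : p.getVert (n + 1) ∈ A
      · exact htrans v u _ hvA hu hnA hadj hadj2 hne
      · exact cross hvA hnA
    have h1 : G.Adj (p.getVert n) v := by rw [hn]; exact hadj.symm
    obtain ⟨q, hq, hql, -⟩ := walk_insert p hp hv n hnlt h1 hnext
    have := hmax q hq
    omega
  have hBsupp : ∀ u : V, u ∉ A → u ∈ p.support := by
    intro u hu
    by_contra hmem
    exact hext0 u hmem (cross h0A hu).symm
  have hno2B : ∀ i, i < p.length → p.getVert i ∈ A ∨ p.getVert (i + 1) ∈ A := by
    intro i hi
    by_contra hcon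
    push_neg at hcon
    obtain ⟨hx, hy⟩ := hcon
    obtain ⟨q, hq, hql, -⟩ :=
      walk_insert p hp hv i hi (cross hvA hx).symm (cross hvA hy)
    have := hmax q hq
    omega
  have hcount := (walk_count A p hp hLA hno2B).1 h0A
  set SA := p.support.toFinset.filter (fun x => x ∈ A) with hSA
  set SB := p.support.toFinset.filter (fun x => x ∉ A) with hSB
  set BU := Finset.univ.filter (fun x => x ∉ A) with hBU
  set NvA := Finset.univ.filter (fun x => x ∈ A ∧ G.Adj v x) with hNvA
  have hSBBU : SB = BU := by
    ext x
    rw [hSB, hBU]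
    simp only [Finset.mem_filter, Finset.mem_univ, true_and, List.mem_toFinset]
    constructor
    · rintro ⟨-, h⟩; exact h
    · intro h; exact ⟨hBsupp x h, h⟩
  have hdisj1 : Disjoint NvA SA := by
    rw [Finset.disjoint_left]
    intro x hx1 hx2
    rw [hNvA, Finset.mem_filter] at hx1
    rw [hSA, Finset.mem_filter, List.mem_toFinset] at hx2
    exact hNvA_supp x hx1.2.1 hx1.2.2 hx2.1
  have hvnot : v ∉ NvA ∪ SA := by
    rw [Finset.mem_union]
    push_neg
    constructor
    · intro h
      rw [hNvA, Finset.mem_filter] at h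
      exact G.irrefl h.2.2
    · intro h
      rw [hSA, Finset.mem_filter, List.mem_toFinset] at h
      exact hv h.1
  have hsub : (NvA ∪ SA) ∪ {v} ⊆ G.neighborFinset b0 := by
    intro x hx
    rw [SimpleGraph.mem_neighborFinset]
    rcases Finset.mem_union.mp hx with hx | hx
    · rcases Finset.mem_union.mp hx with hx | hx
      · rw [hNvA, Finset.mem_filter] at hx
        exact (cross hx.2.1 hb0).symm
      · rw [hSA, Finset.mem_filter] at hx
        exact (cross hx.2 hb0).symm
    · have hxv : x = v := by simpa using hx
      subst hxv
      exact (cross hvA hb0).symm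
  have hcard1 : ((NvA ∪ SA) ∪ {v}).card = NvA.card + SA.card + 1 := by
    rw [Finset.card_union_of_disjoint (Finset.disjoint_singleton_right.mpr hvnot),
      Finset.card_union_of_disjoint hdisj1, Finset.card_singleton]
  have hdegb : NvA.card + SA.card + 1 ≤ G.degree b0 := by
    rw [← hcard1]
    exact Finset.card_le_card hsub
  have hdegv : G.degree v ≤ NvA.card + BU.card := by
    have hsub2 : G.neighborFinset v ⊆ NvA ∪ BU := by
      intro x hx
      rw [SimpleGraph.mem_neighborFinset] at hx
      by_cases hxA : x ∈ A
      · refine Finset.mem_union_left _ ?_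
        rw [hNvA, Finset.mem_filter]
        exact ⟨Finset.mem_univ x, hxA, hx⟩
      · refine Finset.mem_union_right _ ?_
        rw [hBU, Finset.mem_filter]
        exact ⟨Finset.mem_univ x, hxA⟩
    calc G.degree v = (G.neighborFinset v).card := rfl
      _ ≤ (NvA ∪ BU).card := Finset.card_le_card hsub2
      _ ≤ NvA.card + BU.card := Finset.card_union_le _ _
  have hmaxd := G.degree_le_maxDegree b0
  have hBU1 : BU.card + 1 ≤ SA.card := hSBBU ▸ hcount
  omega

end GallaiFormal
end

section
/- Let P be a path in a graph G with endpoints x and y, let H be a complete component of G - V(P) with attachment points s_1, ..., s_k listed in order of traversal of P from x to y, with S = {s_1, ..., s_k}, and suppose that for every S_0 ⊆ S with |S_0| ≤ |V(H)|, the bipartite graph induced between S_0 and V(H) has a matching saturating S_0. Then: (1) if s_1 = x, then G has a path with endpoint y longer than P; if s_k = y, then G has a path with endpoint x longer than P; and if some s_i and s_{i+1} are consecutive on P, then G has a path with endpoints x and y longer than P; (2) if some component of P - S has fewer than |V(H)| vertices, then G has a path longer than P. -/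
open SimpleGraph

namespace GallaiFormal

variable {V : Type}

section Helpers
set_option linter.unusedSectionVars false
variable [DecidableEq V] {G : SimpleGraph V}


lemma getVert_mem_support' {x y : V} (p : G.Walk x y) {i : ℕ} (hi : i ≤ p.length) :
    p.getVert i ∈ p.support :=
  Walk.mem_support_iff_exists_getVert.2 ⟨i, rfl, hi⟩

lemma getVert_injOn' {x y : V} {p : G.Walk x y} (hp : p.IsPath) :
    ∀ i ≤ p.length, ∀ j ≤ p.length, p.getVert i = p.getVert j → i = j := by
  induction p with
  | nil => intro i hi j hj _; simp at hi hj; omega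
  | cons h q ih =>
    rw [Walk.cons_isPath_iff] at hp
    intro i hi j hj hij
    match i, j with
    | 0, 0 => rfl
    | 0, j + 1 =>
      exfalso
      rw [Walk.getVert_zero, Walk.getVert_cons_succ] at hij
      exact hp.2 (hij ▸ getVert_mem_support' q (by simpa using hj))
    | i + 1, 0 =>
      exfalso
      rw [Walk.getVert_zero, Walk.getVert_cons_succ] at hij
      exact hp.2 (hij ▸ getVert_mem_support' q (by simpa using hi))
    | i + 1, j + 1 =>
      rw [Walk.getVert_cons_succ, Walk.getVert_cons_succ] at hij
      simp only [Walk.length_cons, Nat.add_le_add_iff_right] at hi hj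
      exact congrArg (· + 1) (ih hp.1 i hi j hj hij)

lemma takeUntil_len {x y : V} {p : G.Walk x y} (hp : p.IsPath) {i : ℕ} (hi : i ≤ p.length)
    (h : p.getVert i ∈ p.support) : (p.takeUntil _ h).length = i := by
  set t := p.takeUntil _ h with ht
  set d := p.dropUntil _ h with hd
  have hspec : t.append d = p := p.take_spec h
  have hlen : t.length + d.length = p.length := by rw [← Walk.length_append, hspec]
  obtain ⟨n, hn⟩ : ∃ n, n = t.length := ⟨_, rfl⟩
  have h1 : p.getVert n = p.getVert i := by
    conv_lhs => rw [← hspec]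
    rw [Walk.getVert_append, hn]
    simp [Walk.getVert_zero]
  have := getVert_injOn' hp _ (by omega) _ hi h1
  omega

lemma mem_takeUntil_support' {x y : V} {p : G.Walk x y} {u : V} (h : u ∈ p.support) {w : V}
    (hw : w ∈ (p.takeUntil u h).support) :
    ∃ j ≤ (p.takeUntil u h).length, p.getVert j = w := by
  obtain ⟨j, hjw, hj⟩ := Walk.mem_support_iff_exists_getVert.1 hw
  refine ⟨j, hj, ?_⟩
  rw [← hjw]
  have hspec : (p.takeUntil u h).append (p.dropUntil u h) = p := p.take_spec h
  conv_lhs => rw [← hspec]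
  rw [Walk.getVert_append]
  rcases lt_or_eq_of_le hj with hlt | heq
  · simp [hlt]
  · subst heq
    simp [Walk.getVert_length, Walk.getVert_zero]

lemma mem_dropUntil_support' {x y : V} {p : G.Walk x y} {u : V} (h : u ∈ p.support) {w : V}
    (hw : w ∈ (p.dropUntil u h).support) :
    ∃ j, (p.takeUntil u h).length ≤ j ∧ j ≤ p.length ∧ p.getVert j = w := by
  obtain ⟨m, hmw, hm⟩ := Walk.mem_support_iff_exists_getVert.1 hw
  have hspec : (p.takeUntil u h).append (p.dropUntil u h) = p := p.take_spec h
  have hlen : (p.takeUntil u h).length + (p.dropUntil u h).length = p.length := by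
    rw [← Walk.length_append, hspec]
  obtain ⟨k, hk⟩ : ∃ k, k = (p.takeUntil u h).length := ⟨_, rfl⟩
  refine ⟨k + m, by omega, by omega, ?_⟩
  rw [← hmw]
  conv_lhs => rw [← hspec]
  rw [Walk.getVert_append, hk]
  simp

lemma isPath_append' {x s y : V} {q1 : G.Walk x s} {q2 : G.Walk s y}
    (h1 : q1.IsPath) (h2 : q2.IsPath)
    (hd : ∀ w, w ∈ q1.support → w ∈ q2.support → w = s) :
    (q1.append q2).IsPath := by
  rw [Walk.isPath_def, Walk.support_append]
  apply List.Nodup.append (Walk.isPath_def _ |>.1 h1)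
  · have := Walk.isPath_def _ |>.1 h2
    rw [Walk.support_eq_cons] at this
    exact this.of_cons
  · intro w hw1 hw2
    have hw2' : w ∈ q2.support := by
      rw [Walk.support_eq_cons]; exact List.mem_cons_of_mem _ hw2
    have := hd w hw1 hw2'
    subst this
    have := Walk.isPath_def _ |>.1 h2
    rw [Walk.support_eq_cons] at this
    exact this.notMem hw2

lemma clique_path (G : SimpleGraph V) :
    ∀ (n : ℕ) (s : Finset V), s.card = n → (∀ u ∈ s, ∀ v ∈ s, u ≠ v → G.Adj u v) →
    ∀ u ∈ s, ∀ v ∈ s, u ≠ v →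
    ∃ q : G.Walk u v, q.IsPath ∧ q.length + 1 = s.card ∧ ∀ w ∈ q.support, w ∈ s := by
  intro n
  induction n with
  | zero => intro s hcard _ u hu; simp [Finset.card_eq_zero] at hcard; subst hcard; simp at hu
  | succ n ih =>
    intro s hcard hadj u hu v hv huv
    have hv' : v ∈ s.erase u := Finset.mem_erase.2 ⟨Ne.symm huv, hv⟩
    have hcard' : (s.erase u).card = n := by
      rw [Finset.card_erase_of_mem hu, hcard]
      omega

    by_cases hone : s.erase u = {v}
    · refine ⟨Walk.cons (hadj u hu v hv huv) Walk.nil, by simp [hadj u hu v hv huv, huv], ?_, ?_⟩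
      · have : n = 1 := by rw [← hcard', hone, Finset.card_singleton]
        simp [this, hcard]
      · intro w hw; simp at hw; rcases hw with rfl | rfl <;> assumption
    · -- pick w in (s.erase u).erase v
      have hne : ((s.erase u).erase v).Nonempty := by
        rw [Finset.nonempty_iff_ne_empty]
        intro hemp
        apply hone
        apply Finset.eq_singleton_iff_unique_mem.2 ⟨hv', ?_⟩
        intro z hz
        by_contra hzv
        exact Finset.notMem_empty z (hemp ▸ Finset.mem_erase.2 ⟨hzv, hz⟩)
      obtain ⟨w, hw⟩ := hne
      have hws : w ∈ s.erase u := (Finset.mem_erase.1 hw).2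
      have hwv : w ≠ v := (Finset.mem_erase.1 hw).1
      obtain ⟨q', hq'path, hq'len, hq'supp⟩ := ih (s.erase u)
        hcard' (fun a ha b hb hab => hadj a (Finset.mem_of_mem_erase ha) b
          (Finset.mem_of_mem_erase hb) hab) w hws v hv' hwv
      have huw : u ≠ w := fun h => (Finset.mem_erase.1 hws).1 h.symm
      refine ⟨Walk.cons (hadj u hu w (Finset.mem_of_mem_erase hws) huw) q', ?_, ?_, ?_⟩
      · rw [Walk.cons_isPath_iff]
        exact ⟨hq'path, fun hmem => (Finset.mem_erase.1 (hq'supp u hmem)).1 rfl⟩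
      · simp only [Walk.length_cons]; omega
      · intro z hz
        rw [Walk.support_cons] at hz
        rcases List.mem_cons.1 hz with rfl | hz'
        · exact hu
        · exact Finset.mem_of_mem_erase (hq'supp z hz')

end Helpers

/-- Lemma, parts 1 and 2: `H` is a complete component of `G - V(p)` whose
attachment set satisfies the matching (saturation) condition.  (1) If `x` (resp. `y`) is an
attachment point there is a longer path with endpoint `y` (resp. `x`), and if two attachment
points are consecutive on `p` there is a longer `xy`-path; (2) if some component of `P - S`
has fewer than `|V(H)|` vertices, there is a longer path. -/

theorem stmt8 (G : SimpleGraph V) {x y : V} (p : G.Walk x y) (hp : p.IsPath)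
    (H : Set V) (hH : IsCompOutside G {v | v ∈ p.support} H) (hcomplete : G.IsClique H)
    (hmatch : ∀ S0 ⊆ attachSet G p H, S0.ncard ≤ H.ncard →
      ∃ f : V → V, Set.InjOn f S0 ∧ ∀ s ∈ S0, f s ∈ H ∧ G.Adj s (f s)) :
    ((x ∈ attachSet G p H →
        ∃ (z : V) (q : G.Walk z y), q.IsPath ∧ p.length < q.length) ∧
      (y ∈ attachSet G p H →
        ∃ (z : V) (q : G.Walk x z), q.IsPath ∧ p.length < q.length) ∧
      (∀ i, i < p.length → p.getVert i ∈ attachSet G p H →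
        p.getVert (i + 1) ∈ attachSet G p H →
        ∃ q : G.Walk x y, q.IsPath ∧ p.length < q.length)) ∧
    (∀ a b : ℕ, IsGapInterval G p (attachSet G p H) a b → b - a + 1 < H.ncard →
      ∃ (u w : V) (q : G.Walk u w), q.IsPath ∧ p.length < q.length) := by
  classical
  obtain ⟨hHne, hHdisj, hHconn, hHclosed⟩ := hH
  have hdisj : ∀ u ∈ H, u ∉ p.support := fun u hu hus => Set.disjoint_left.1 hHdisj hu hus
  constructor
  · refine ⟨?_, ?_, ?_⟩
    · rintro ⟨hxs, u, huH, hadj⟩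
      refine ⟨u, Walk.cons hadj p, ?_, by simp⟩
      rw [Walk.cons_isPath_iff]
      exact ⟨hp, hdisj u huH⟩
    · rintro ⟨hys, u, huH, hadj⟩
      refine ⟨u, (Walk.cons hadj p.reverse).reverse, ?_, by simp⟩
      rw [Walk.isPath_reverse_iff, Walk.cons_isPath_iff]
      exact ⟨hp.reverse, by simpa using hdisj u huH⟩
    · rintro i hi ⟨-, u, huH, hu⟩ ⟨-, u', hu'H, hu'⟩
      have hsmem : p.getVert i ∈ p.support := getVert_mem_support' p (by omega)
      have hs'mem : p.getVert (i+1) ∈ p.support := getVert_mem_support' p (by omega)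
      have hss' : p.getVert i ≠ p.getVert (i+1) := fun h => by
        have := getVert_injOn' hp i (by omega) (i+1) (by omega) h; omega
      have htlen : (p.takeUntil _ hsmem).length = i := takeUntil_len hp (by omega) hsmem
      have ht'len : (p.takeUntil _ hs'mem).length = i + 1 := takeUntil_len hp (by omega) hs'mem
      have hdlen : (p.takeUntil _ hs'mem).length + (p.dropUntil _ hs'mem).length = p.length := by
        rw [← Walk.length_append, p.take_spec hs'mem]
      have hsnotd : p.getVert i ∉ (p.dropUntil _ hs'mem).support := by
        intro hmem
        obtain ⟨j, hj1, hj2, hj3⟩ := mem_dropUntil_support' hs'mem hmem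
        have := getVert_injOn' hp j hj2 i (by omega) hj3
        omega
      have htH : ∀ w ∈ (p.takeUntil _ hsmem).support, w ∉ H := fun w hw hwH =>
        hdisj w hwH (p.support_takeUntil_subset hsmem hw)
      have hdH : ∀ w ∈ (p.dropUntil _ hs'mem).support, w ∉ H := fun w hw hwH =>
        hdisj w hwH (p.support_dropUntil_subset hs'mem hw)
      have hts' : p.getVert (i+1) ∉ (p.takeUntil _ hsmem).support := by
        intro hmem
        obtain ⟨j, hj1, hj2⟩ := mem_takeUntil_support' hsmem hmem
        have := getVert_injOn' hp j (by omega) (i+1) (by omega) hj2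
        omega
      have htd : ∀ w ∈ (p.takeUntil _ hsmem).support, w ∈ (p.dropUntil _ hs'mem).support → False := by
        intro w hw hwd
        obtain ⟨j, hj1, hj2⟩ := mem_takeUntil_support' hsmem hw
        obtain ⟨j', hj'1, hj'2, hj'3⟩ := mem_dropUntil_support' hs'mem hwd
        have := getVert_injOn' hp j (by omega) j' hj'2 (hj2.trans hj'3.symm)
        omega
      have hus : u ≠ p.getVert i := fun h => hdisj u huH (h ▸ hsmem)
      have hus' : u ≠ p.getVert (i+1) := fun h => hdisj u huH (h ▸ hs'mem)
      have hu's : u' ≠ p.getVert i := fun h => hdisj u' hu'H (h ▸ hsmem)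
      have hu's' : u' ≠ p.getVert (i+1) := fun h => hdisj u' hu'H (h ▸ hs'mem)
      have hM : ∃ M : G.Walk (p.getVert i) (p.getVert (i+1)), M.IsPath ∧ 2 ≤ M.length ∧
          ∀ w ∈ M.support, w = p.getVert i ∨ w = p.getVert (i+1) ∨ w ∈ H := by
        by_cases huu : u = u'
        · subst huu
          refine ⟨Walk.cons hu.symm (Walk.cons hu' Walk.nil), ?_, by simp, ?_⟩
          · rw [Walk.cons_isPath_iff, Walk.cons_isPath_iff]
            refine ⟨⟨Walk.IsPath.nil, ?_⟩, ?_⟩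
            · simpa using hus'
            · simp only [Walk.support_cons, Walk.support_nil, List.mem_cons,
                List.not_mem_nil, or_false]
              push_neg
              exact ⟨Ne.symm hus, hss'⟩
          · intro w hw
            simp only [Walk.support_cons, Walk.support_nil, List.mem_cons,
              List.not_mem_nil, or_false] at hw
            rcases hw with rfl | rfl | rfl
            · left; rfl
            · right; right; exact huH
            · right; left; rfl
        · refine ⟨Walk.cons hu.symm (Walk.cons (hcomplete huH hu'H huu)
            (Walk.cons hu' Walk.nil)), ?_, by simp, ?_⟩
          · rw [Walk.cons_isPath_iff, Walk.cons_isPath_iff, Walk.cons_isPath_iff]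
            refine ⟨⟨⟨Walk.IsPath.nil, ?_⟩, ?_⟩, ?_⟩
            · simpa using hu's'
            · simp only [Walk.support_cons, Walk.support_nil, List.mem_cons,
                List.not_mem_nil, or_false]
              push_neg
              exact ⟨huu, hus'⟩
            · simp only [Walk.support_cons, Walk.support_nil, List.mem_cons,
                List.not_mem_nil, or_false]
              push_neg
              exact ⟨Ne.symm hus, Ne.symm hu's, hss'⟩
          · intro w hw
            simp only [Walk.support_cons, Walk.support_nil, List.mem_cons,
              List.not_mem_nil, or_false] at hw
            rcases hw with rfl | rfl | rfl | rfl
            · left; rfl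
            · right; right; exact huH
            · right; right; exact hu'H
            · right; left; rfl
      obtain ⟨M, hMpath, hMlen, hMsupp⟩ := hM
      have hMd : (M.append (p.dropUntil _ hs'mem)).IsPath := by
        refine isPath_append' hMpath (hp.dropUntil hs'mem) ?_
        intro w hwM hwd
        rcases hMsupp w hwM with rfl | rfl | hwH
        · exact absurd hwd hsnotd
        · rfl
        · exact absurd hwH (hdH w hwd)
      have hq : ((p.takeUntil _ hsmem).append (M.append (p.dropUntil _ hs'mem))).IsPath := by
        refine isPath_append' (hp.takeUntil hsmem) hMd ?_
        intro w hwt hw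
        rcases (Walk.mem_support_append_iff _ _).1 hw with hwM | hwd
        · rcases hMsupp w hwM with rfl | rfl | hwH
          · rfl
          · exact absurd hwt hts'
          · exact absurd hwH (htH w hwt)
        · exact absurd hwd (htd w hwt)
      refine ⟨(p.takeUntil _ hsmem).append (M.append (p.dropUntil _ hs'mem)), hq, ?_⟩
      simp only [Walk.length_append]
      omega
  · rintro a b ⟨hab, hbl, havoid, hleft, hright⟩ hcard
    have hHfin : H.Finite := by
      rw [← Set.not_infinite]
      intro hinf
      rw [hinf.ncard] at hcard
      omega
    set F := hHfin.toFinset with hFdef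
    have hFcard : F.card = H.ncard := (Set.ncard_eq_toFinset_card H hHfin).symm
    have hmemF : ∀ {w : V}, w ∈ F ↔ w ∈ H := fun {w} => Set.Finite.mem_toFinset hHfin
    have hFadj : ∀ u ∈ F, ∀ v ∈ F, u ≠ v → G.Adj u v := fun u hu v hv huv =>
      hcomplete (hmemF.1 hu) (hmemF.1 hv) huv
    by_cases hbend : b = p.length
    · rcases hleft with ha0 | hsleft
      · -- whole path avoids S : Hamiltonian path of H is longer
        have h2 : 1 < F.card := by omega
        obtain ⟨u, hu, v, hv, huv⟩ := Finset.one_lt_card.1 h2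
        obtain ⟨q, hqpath, hqlen, -⟩ := clique_path G F.card F rfl hFadj u hu v hv huv
        exact ⟨u, v, q, hqpath, by omega⟩
      · -- b = length, attachment on the left
        have ha1 : 1 ≤ a := by
          by_contra h
          have ha0 : a = 0 := by omega
          exact havoid 0 (by omega) (by omega) (by rw [ha0] at hsleft; simpa using hsleft)
        obtain ⟨hsmem', u, huH, hu⟩ := hsleft
        have hsmem : p.getVert (a-1) ∈ p.support := getVert_mem_support' p (by omega)
        have htlen : (p.takeUntil _ hsmem).length = a - 1 := takeUntil_len hp (by omega) hsmem
        have huF : u ∈ F := hmemF.2 huH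
        have hne : (F.erase u).Nonempty := Finset.card_pos.1 (by
          rw [Finset.card_erase_of_mem huF]; omega)
        obtain ⟨w', hw'⟩ := hne
        obtain ⟨q0, hq0path, hq0len, hq0supp⟩ := clique_path G F.card F rfl hFadj u huF
          w' (Finset.mem_of_mem_erase hw') (fun h => (Finset.mem_erase.1 hw').1 h.symm)
        have hq0H : ∀ w ∈ q0.support, w ∈ H := fun w hw => hmemF.1 (hq0supp w hw)
        have hconspath : (Walk.cons hu.symm q0).IsPath := by
          rw [Walk.cons_isPath_iff]
          exact ⟨hq0path, fun h => hdisj _ (hq0H _ h) hsmem⟩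
        have hqpath : ((p.takeUntil _ hsmem).append (Walk.cons hu.symm q0)).IsPath := by
          refine isPath_append' (hp.takeUntil hsmem) hconspath ?_
          intro w hwt hw
          rw [Walk.support_cons] at hw
          rcases List.mem_cons.1 hw with rfl | hw'
          · rfl
          · exact absurd (p.support_takeUntil_subset hsmem hwt) (hdisj w (hq0H w hw'))
        refine ⟨x, w', (p.takeUntil _ hsmem).append (Walk.cons hu.symm q0), hqpath, ?_⟩
        simp only [Walk.length_append, Walk.length_cons]
        omega
    · -- b < length, attachment on the right
      have hs'S : p.getVert (b+1) ∈ attachSet G p H := hright.resolve_left hbend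
      obtain ⟨hs'mem', u', hu'H, hu'⟩ := hs'S
      have hs'mem : p.getVert (b+1) ∈ p.support := getVert_mem_support' p (by omega)
      have ht'len : (p.takeUntil _ hs'mem).length = b + 1 := takeUntil_len hp (by omega) hs'mem
      have hdlen : (p.takeUntil _ hs'mem).length + (p.dropUntil _ hs'mem).length = p.length := by
        rw [← Walk.length_append, p.take_spec hs'mem]
      have hu'F : u' ∈ F := hmemF.2 hu'H
      have hdpath : (p.dropUntil _ hs'mem).IsPath := hp.dropUntil hs'mem
      have hu'notd : u' ∉ (p.dropUntil _ hs'mem).support := fun h =>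
        hdisj u' hu'H (p.support_dropUntil_subset hs'mem h)
      rcases hleft with ha0 | hsleft
      · -- a = 0 : Ham path of H then tail of p
        have hne : (F.erase u').Nonempty := Finset.card_pos.1 (by
          rw [Finset.card_erase_of_mem hu'F]; omega)
        obtain ⟨w', hw'⟩ := hne
        obtain ⟨q0, hq0path, hq0len, hq0supp⟩ := clique_path G F.card F rfl hFadj w'
          (Finset.mem_of_mem_erase hw') u' hu'F (Finset.mem_erase.1 hw').1
        have hq0H : ∀ w ∈ q0.support, w ∈ H := fun w hw => hmemF.1 (hq0supp w hw)
        have hconspath : (Walk.cons hu' (p.dropUntil _ hs'mem)).IsPath := by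
          rw [Walk.cons_isPath_iff]; exact ⟨hdpath, hu'notd⟩
        have hqpath : (q0.append (Walk.cons hu' (p.dropUntil _ hs'mem))).IsPath := by
          refine isPath_append' hq0path hconspath ?_
          intro w hw0 hw
          rw [Walk.support_cons] at hw
          rcases List.mem_cons.1 hw with rfl | hw'
          · rfl
          · exact absurd (p.support_dropUntil_subset hs'mem hw') (hdisj w (hq0H w hw0))
        refine ⟨w', y, q0.append (Walk.cons hu' (p.dropUntil _ hs'mem)), hqpath, ?_⟩
        simp only [Walk.length_append, Walk.length_cons]
        omega
      · -- middle case : detour through all of H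
        have ha1 : 1 ≤ a := by
          by_contra h
          have ha0 : a = 0 := by omega
          exact havoid 0 (by omega) (by omega) (by rw [ha0] at hsleft; simpa using hsleft)
        have hsmem : p.getVert (a-1) ∈ p.support := getVert_mem_support' p (by omega)
        have htlen : (p.takeUntil _ hsmem).length = a - 1 := takeUntil_len hp (by omega) hsmem
        have hss' : p.getVert (a-1) ≠ p.getVert (b+1) := fun h => by
          have := getVert_injOn' hp (a-1) (by omega) (b+1) (by omega) h; omega
        have hS0sub : ({p.getVert (a-1), p.getVert (b+1)} : Set V) ⊆ attachSet G p H := by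
          rintro w (rfl | rfl)
          · exact hsleft
          · exact ⟨hs'mem', u', hu'H, hu'⟩
        have hS0card : ({p.getVert (a-1), p.getVert (b+1)} : Set V).ncard ≤ H.ncard := by
          have h1 : ({p.getVert (a-1), p.getVert (b+1)} : Set V).ncard ≤ 2 := by
            refine le_trans (Set.ncard_insert_le _ _) ?_
            simp [Set.ncard_singleton]
          omega
        obtain ⟨f, hfinj, hf⟩ := hmatch _ hS0sub hS0card
        have hfs := hf _ (Set.mem_insert _ _)
        have hfs' := hf _ (Set.mem_insert_of_mem _ rfl)
        have hfne : f (p.getVert (a-1)) ≠ f (p.getVert (b+1)) := fun h =>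
          hss' (hfinj (Set.mem_insert _ _) (Set.mem_insert_of_mem _ rfl) h)
        obtain ⟨q0, hq0path, hq0len, hq0supp⟩ := clique_path G F.card F rfl hFadj
          (f (p.getVert (a-1))) (hmemF.2 hfs.1) (f (p.getVert (b+1))) (hmemF.2 hfs'.1) hfne
        have hq0H : ∀ w ∈ q0.support, w ∈ H := fun w hw => hmemF.1 (hq0supp w hw)
        have hfs'notd : f (p.getVert (b+1)) ∉ (p.dropUntil _ hs'mem).support := fun h =>
          hdisj _ hfs'.1 (p.support_dropUntil_subset hs'mem h)
        have hinner : (Walk.cons hfs'.2.symm (p.dropUntil _ hs'mem)).IsPath := by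
          rw [Walk.cons_isPath_iff]; exact ⟨hdpath, hfs'notd⟩
        have hsnotd : p.getVert (a-1) ∉ (p.dropUntil _ hs'mem).support := by
          intro hmem
          obtain ⟨j, hj1, hj2, hj3⟩ := mem_dropUntil_support' hs'mem hmem
          have := getVert_injOn' hp j hj2 (a-1) (by omega) hj3
          omega
        have hmid : (q0.append (Walk.cons hfs'.2.symm (p.dropUntil _ hs'mem))).IsPath := by
          refine isPath_append' hq0path hinner ?_
          intro w hw0 hw
          rw [Walk.support_cons] at hw
          rcases List.mem_cons.1 hw with rfl | hw'
          · rfl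
          · exact absurd (p.support_dropUntil_subset hs'mem hw') (hdisj w (hq0H w hw0))
        have hcons : (Walk.cons hfs.2 (q0.append (Walk.cons hfs'.2.symm (p.dropUntil _ hs'mem)))).IsPath := by
          rw [Walk.cons_isPath_iff]
          refine ⟨hmid, ?_⟩
          intro hmem
          rcases (Walk.mem_support_append_iff _ _).1 hmem with hw0 | hw
          · exact hdisj _ (hq0H _ hw0) hsmem
          · rw [Walk.support_cons] at hw
            rcases List.mem_cons.1 hw with heq | hw'
            · exact hdisj _ hfs'.1 (heq ▸ hsmem)
            · exact hsnotd hw'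
        have hqpath : ((p.takeUntil _ hsmem).append (Walk.cons hfs.2 (q0.append (Walk.cons hfs'.2.symm (p.dropUntil _ hs'mem))))).IsPath := by
          refine isPath_append' (hp.takeUntil hsmem) hcons ?_
          intro w hwt hw
          rw [Walk.support_cons] at hw
          rcases List.mem_cons.1 hw with rfl | hw'
          · rfl
          · exfalso
            rcases (Walk.mem_support_append_iff _ _).1 hw' with hw0 | hw''
            · exact hdisj _ (hq0H _ hw0) (p.support_takeUntil_subset hsmem hwt)
            · rw [Walk.support_cons] at hw''
              rcases List.mem_cons.1 hw'' with heq | hwd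
              · exact hdisj _ hfs'.1 (heq ▸ p.support_takeUntil_subset hsmem hwt)
              · obtain ⟨j, hj1, hj2⟩ := mem_takeUntil_support' hsmem hwt
                obtain ⟨j', hj'1, hj'2, hj'3⟩ := mem_dropUntil_support' hs'mem hwd
                have := getVert_injOn' hp j (by omega) j' hj'2 (hj2.trans hj'3.symm)
                omega
        refine ⟨x, y, (p.takeUntil _ hsmem).append (Walk.cons hfs.2 (q0.append (Walk.cons hfs'.2.symm (p.dropUntil _ hs'mem)))),
          hqpath, ?_⟩
        simp only [Walk.length_append, Walk.length_cons]
        omega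

end GallaiFormal
end

section
/- Let P be a path in a graph G with endpoints x and y, let H be a complete component of G - V(P) with attachment points s_1, ..., s_k listed in order of traversal of P from x to y, with S = {s_1, ..., s_k}, and suppose that for every S_0 ⊆ S with |S_0| ≤ |V(H)|, the bipartite graph induced between S_0 and V(H) has a matching saturating S_0. Then: (1) if w and w' lie in distinct components of P - S - V(P[x,s_1]), rank(w) + rank(w') < |V(H)|, and ww' is an edge of G, then G has a path with endpoints x and y longer than P; (2) if w and w' lie in distinct components of P - S, rank(w) + rank(w') < |V(H)|, and ww' is an edge of G, then G has a path with endpoint y that is longer than P. -/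
open SimpleGraph

namespace GallaiFormal

variable {V : Type}

lemma getVert_inj_s9 {G : SimpleGraph V} {x y : V} {p : G.Walk x y} (hp : p.IsPath) :
    ∀ m, m ≤ p.length → ∀ n, n ≤ p.length → p.getVert m = p.getVert n → m = n := by
  induction p with
  | nil => intro m hm n hn _; simp at hm hn; omega
  | @cons u v w h q ih =>
    rw [Walk.cons_isPath_iff] at hp
    intro m hm n hn he
    match m, n with
    | 0, 0 => rfl
    | 0, n+1 =>
      exfalso
      simp only [Walk.getVert_zero, Walk.getVert_cons_succ] at he
      exact hp.2 (Walk.mem_support_iff_exists_getVert.2 ⟨n, he.symm, by simpa using hn⟩)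
    | m+1, 0 =>
      exfalso
      simp only [Walk.getVert_zero, Walk.getVert_cons_succ] at he
      exact hp.2 (Walk.mem_support_iff_exists_getVert.2 ⟨m, he, by simpa using hm⟩)
    | m+1, n+1 =>
      simp only [Walk.getVert_cons_succ] at he
      have := ih hp.1 m (by simpa using hm) n (by simpa using hn) he
      omega

lemma walk_of_chain {G : SimpleGraph V} :
    ∀ (L : List V) (_ : L.Chain' G.Adj) (z w : V) (_ : L.head? = some z)
      (_ : L.getLast? = some w),
      ∃ q : G.Walk z w, q.support = L ∧ q.length + 1 = L.length := by
  intro L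
  induction L with
  | nil => intro _ z w hz _; simp at hz
  | cons a L ih =>
    intro hC z w hz hw
    simp only [List.head?_cons, Option.some_inj] at hz
    subst hz
    match L, hC, hw with
    | [], _, hw =>
      simp only [List.getLast?_singleton, Option.some_inj] at hw
      subst hw
      exact ⟨Walk.nil, by simp, by simp⟩
    | b :: L, hC, hw =>
      rw [List.Chain', List.isChain_cons_cons] at hC
      rw [List.getLast?_cons_cons] at hw
      obtain ⟨q, hs, hl⟩ := ih hC.2 b w (by simp) hw
      exact ⟨Walk.cons hC.1 q, by simp [hs], by simp [← hl]⟩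

lemma chain'_clique {G : SimpleGraph V} {C : Set V} (hc : G.IsClique C) :
    ∀ (l : List V), (∀ v ∈ l, v ∈ C) → l.Nodup → l.Chain' G.Adj := by
  intro l
  induction l with
  | nil => simp [List.Chain']
  | cons a l ih =>
    intro hmem hnd
    match l with
    | [] => simp [List.Chain']
    | b :: l =>
      rw [List.Chain', List.isChain_cons_cons]
      refine ⟨hc (hmem a (by simp)) (hmem b (by simp)) ?_,
        ih (fun v hv => hmem v (by simp [hv])) hnd.of_cons⟩
      intro h; subst h; simp at hnd

lemma chain'_seg {G : SimpleGraph V} {x y : V} (p : G.Walk x y) (u n : ℕ)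
    (h : u + n ≤ p.length + 1) : ((List.range' u n).map p.getVert).Chain' G.Adj := by
  rw [List.Chain', List.isChain_map, List.isChain_iff_getElem]
  intro i hi
  simp only [List.length_range'] at hi
  simp only [List.get_eq_getElem, List.getElem_range']
  have hlt : u + i < p.length := by omega
  have := p.adj_getVert_succ hlt
  convert this using 2 <;> omega

lemma seg_head {f : ℕ → V} (u n : ℕ) (hn : 0 < n) :
    ((List.range' u n).map f).head? = some (f u) := by
  obtain ⟨m, rfl⟩ : ∃ m, n = m + 1 := ⟨n - 1, by omega⟩
  simp [List.range'_succ]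

lemma seg_last {f : ℕ → V} (u n : ℕ) (hn : 0 < n) :
    ((List.range' u n).map f).getLast? = some (f (u + n - 1)) := by
  obtain ⟨m, rfl⟩ : ∃ m, n = m + 1 := ⟨n - 1, by omega⟩
  rw [List.range'_concat]
  simp

lemma seg_nodup {G : SimpleGraph V} {x y : V} {p : G.Walk x y} (hp : p.IsPath) (u n : ℕ)
    (h : u + n ≤ p.length + 1) : ((List.range' u n).map p.getVert).Nodup := by
  refine List.Nodup.map_on ?_ (List.nodup_range' (s := u) (n := n))
  intro a ha b hb hab
  rw [List.mem_range'_1] at ha hb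
  exact getVert_inj_s9 hp a (by omega) b (by omega) hab

lemma core {G : SimpleGraph V} {x y : V} {p : G.Walk x y} (hp : p.IsPath)
    {H : Set V} (hdisj : ∀ v ∈ H, v ∉ p.support) (hclique : G.IsClique H)
    {hl : List V} (hlnd : hl.Nodup) (hlH : ∀ v ∈ hl, v ∈ H)
    {h h' : V} (hlhead : hl.head? = some h) (hllast : hl.getLast? = some h')
    {a b i j : ℕ} (hai : a ≤ i) (hib : i < b) (hbj : b ≤ j) (hj : j ≤ p.length)
    (hllen : (i - a) + (j - b) < hl.length)
    (hsh : 0 < a → G.Adj (p.getVert (a-1)) h)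
    (hs'h' : G.Adj (p.getVert (b-1)) h')
    (hadj : G.Adj (p.getVert i) (p.getVert j)) :
    ∃ (z : V) (q : G.Walk z y), q.IsPath ∧ p.length < q.length ∧ (0 < a → z = x) := by
  classical
  set B1 : List V := (List.range' 0 a).map p.getVert with hB1
  set B3 : List V := ((List.range' i (b - i)).map p.getVert).reverse with hB3
  set B4 : List V := (List.range' j (p.length + 1 - j)).map p.getVert with hB4
  set L : List V := B1 ++ (hl ++ (B3 ++ B4)) with hL
  have hbi : 0 < b - i := by omega
  have hj4 : 0 < p.length + 1 - j := by omega
  -- membership characterizations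
  have memB1 : ∀ v ∈ B1, ∃ m, m < a ∧ p.getVert m = v := by
    intro v hv
    simp only [hB1, List.mem_map, List.mem_range'_1] at hv
    obtain ⟨m, hm, rfl⟩ := hv
    exact ⟨m, by omega, rfl⟩
  have memB3 : ∀ v ∈ B3, ∃ m, i ≤ m ∧ m ≤ b - 1 ∧ p.getVert m = v := by
    intro v hv
    simp only [hB3, List.mem_reverse, List.mem_map, List.mem_range'_1] at hv
    obtain ⟨m, hm, rfl⟩ := hv
    exact ⟨m, by omega, by omega, rfl⟩
  have memB4 : ∀ v ∈ B4, ∃ m, j ≤ m ∧ m ≤ p.length ∧ p.getVert m = v := by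
    intro v hv
    simp only [hB4, List.mem_map, List.mem_range'_1] at hv
    obtain ⟨m, hm, rfl⟩ := hv
    exact ⟨m, by omega, by omega, rfl⟩
  have hlsup : ∀ v ∈ hl, v ∉ p.support := fun v hv => hdisj v (hlH v hv)
  -- nodup
  have hnd : L.Nodup := by
    have nd1 : B1.Nodup := seg_nodup hp 0 a (by omega)
    have nd3 : B3.Nodup := by
      rw [hB3, List.nodup_reverse]; exact seg_nodup hp i (b-i) (by omega)
    have nd4 : B4.Nodup := seg_nodup hp j (p.length + 1 - j) (by omega)
    have d34 : B3.Disjoint B4 := by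
      intro v hv3 hv4
      obtain ⟨m, hm1, hm2, rfl⟩ := memB3 v hv3
      obtain ⟨n, hn1, hn2, he⟩ := memB4 _ hv4
      have := getVert_inj_s9 hp n (by omega) m (by omega) he
      omega
    have dl3 : hl.Disjoint B3 := by
      intro v hv hv3
      obtain ⟨m, _, hm2, rfl⟩ := memB3 v hv3
      exact hlsup _ hv (Walk.mem_support_iff_exists_getVert.2 ⟨m, rfl, by omega⟩)
    have dl4 : hl.Disjoint B4 := by
      intro v hv hv4
      obtain ⟨m, _, hm2, rfl⟩ := memB4 v hv4
      exact hlsup _ hv (Walk.mem_support_iff_exists_getVert.2 ⟨m, rfl, by omega⟩)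
    have d1l : B1.Disjoint hl := by
      intro v hv1 hv
      obtain ⟨m, hm, rfl⟩ := memB1 v hv1
      exact hlsup _ hv (Walk.mem_support_iff_exists_getVert.2 ⟨m, rfl, by omega⟩)
    have d13 : B1.Disjoint B3 := by
      intro v hv1 hv3
      obtain ⟨m, hm, rfl⟩ := memB1 v hv1
      obtain ⟨n, hn1, hn2, he⟩ := memB3 _ hv3
      have := getVert_inj_s9 hp n (by omega) m (by omega) he
      omega
    have d14 : B1.Disjoint B4 := by
      intro v hv1 hv4
      obtain ⟨m, hm, rfl⟩ := memB1 v hv1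
      obtain ⟨n, hn1, hn2, he⟩ := memB4 _ hv4
      have := getVert_inj_s9 hp n (by omega) m (by omega) he
      omega
    rw [hL]
    simp only [List.nodup_append, ← List.disjoint_iff_ne, List.disjoint_append_right]
    tauto
  -- chain
  have hlne : hl ≠ [] := by intro hcon; rw [hcon] at hlhead; simp at hlhead
  have hchain : L.Chain' G.Adj := by
    rw [hL]
    refine List.isChain_append.2 ⟨chain'_seg p 0 a (by omega),
      List.isChain_append.2 ⟨chain'_clique hclique hl hlH hlnd,
        List.isChain_append.2 ⟨?_, chain'_seg p j (p.length + 1 - j) (by omega), ?_⟩, ?_⟩, ?_⟩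
    · -- chain B3
      rw [hB3, List.isChain_reverse]
      have : (fun a b => G.Adj b a) = G.Adj := by ext a b; exact G.adj_comm b a
      rw [this]
      exact chain'_seg p i (b - i) (by omega)
    · -- junction B3 B4
      intro v hv w hw
      rw [hB3, List.getLast?_reverse, seg_head _ _ hbi] at hv
      rw [hB4, seg_head _ _ hj4] at hw
      simp only [Option.mem_def, Option.some_inj] at hv hw
      rw [← hv, ← hw]; exact hadj
    · -- junction hl (B3++B4)
      intro v hv w hw
      rw [hllast] at hv
      rw [List.head?_append, hB3, List.head?_reverse, seg_last _ _ hbi] at hw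
      simp only [Option.mem_def, Option.some_inj] at hv
      have : i + (b - i) - 1 = b - 1 := by omega
      rw [this] at hw
      simp only [Option.mem_def, Option.or_eq_some_iff, Option.some_inj] at hw
      have hw' : w = p.getVert (b-1) := by
        rcases hw with hw | hw
        · exact hw.symm
        · exact absurd hw.1 (by simp)
      rw [← hv, hw']
      exact hs'h'.symm
    · -- junction B1 rest
      intro v hv w hw
      rcases Nat.eq_zero_or_pos a with ha | ha
      · rw [hB1, ha] at hv; simp at hv
      · rw [hB1, seg_last _ _ ha] at hv
        rw [List.head?_append, hlhead] at hw
        simp only [Option.mem_def, Option.some_inj, Option.or_eq_some_iff] at hv hw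
        have hw' : w = h := by
          rcases hw with hw | hw
          · exact hw.symm
          · exact absurd hw.1 (by simp)
        have hv' : v = p.getVert (a - 1) := by rw [← hv]; congr 1; omega
        rw [hv', hw']
        exact hsh ha
  -- last
  have hlast : L.getLast? = some y := by
    rw [hL, List.getLast?_append, List.getLast?_append, List.getLast?_append,
      hB4, seg_last _ _ hj4]
    have : j + (p.length + 1 - j) - 1 = p.length := by omega
    rw [this, p.getVert_length]
    rfl
  -- length
  have hLlen : L.length = a + (hl.length + ((b - i) + (p.length + 1 - j))) := by
    simp [hL, hB1, hB3, hB4]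
  rcases Nat.eq_zero_or_pos a with ha | ha
  · have hB1e : B1 = [] := by rw [hB1, ha]; simp
    have hhead : L.head? = some h := by
      rw [hL, hB1e, List.nil_append, List.head?_append, hlhead]
      rfl
    obtain ⟨q, hsup, hlen⟩ := walk_of_chain L hchain h y hhead hlast
    refine ⟨h, q, ?_, by omega, by omega⟩
    rw [Walk.isPath_def, hsup]; exact hnd
  · have hhead : L.head? = some x := by
      rw [hL, List.head?_append, hB1, seg_head _ _ ha, p.getVert_zero]
      rfl
    obtain ⟨q, hsup, hlen⟩ := walk_of_chain L hchain x y hhead hlast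
    refine ⟨x, q, ?_, by omega, fun _ => rfl⟩
    rw [Walk.isPath_def, hsup]; exact hnd


lemma main {G : SimpleGraph V} {x y : V} {p : G.Walk x y} (hp : p.IsPath)
    {H : Set V} (hH : IsCompOutside G {v | v ∈ p.support} H) (hclique : G.IsClique H)
    (hmatch : ∀ S0 ⊆ attachSet G p H, S0.ncard ≤ H.ncard →
      ∃ f : V → V, Set.InjOn f S0 ∧ ∀ s ∈ S0, f s ∈ H ∧ G.Adj s (f s))
    (i j : ℕ) (hij : i < j) (hj : j ≤ p.length)
    (hiS : p.getVert i ∉ attachSet G p H) (hjS : p.getVert j ∉ attachSet G p H)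
    (hmid : ∃ m, i < m ∧ m < j ∧ p.getVert m ∈ attachSet G p H)
    (hrank : rankAt G p (attachSet G p H) i + rankAt G p (attachSet G p H) j < H.ncard)
    (hadj : G.Adj (p.getVert i) (p.getVert j)) :
    ∃ (z : V) (q : G.Walk z y), q.IsPath ∧ p.length < q.length ∧
      ((∃ m < i, p.getVert m ∈ attachSet G p H) → z = x) := by
  classical
  set S := attachSet G p H with hS
  have hdisj : ∀ v ∈ H, v ∉ p.support := by
    intro v hv hsup
    exact (Set.disjoint_left.1 hH.2.1) hv hsup
  have hncard : 1 ≤ H.ncard := by omega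
  have hfin : H.Finite := by
    by_contra hc
    rw [Set.Infinite.ncard hc] at hncard
    omega
  -- define a
  have hPi : ∀ k, i ≤ k → k ≤ i → p.getVert k ∉ S := by
    intro k h1 h2
    have hk : k = i := by omega
    rw [hk]; exact hiS
  have hexa : ∃ a, ∀ k, a ≤ k → k ≤ i → p.getVert k ∉ S := ⟨i, hPi⟩
  set a := Nat.find hexa with ha_def
  have haspec := Nat.find_spec hexa
  have hai : a ≤ i := Nat.find_min' hexa hPi
  have haS : 0 < a → p.getVert (a-1) ∈ S := by
    intro ha
    by_contra hcon
    refine Nat.find_min hexa (show a - 1 < a by omega) ?_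
    intro k h1 h2
    rcases Nat.lt_or_ge k a with hk | hk
    · have hk' : k = a - 1 := by omega
      rw [hk']; exact hcon
    · exact haspec k hk h2
  have hra : i - a ≤ rankAt G p S i := by
    apply le_csSup
    · exact ⟨i, fun r hr => by obtain ⟨a', ha', _⟩ := hr; omega⟩
    · exact ⟨a, by omega, haspec⟩
  -- define b
  have hPj : ∀ k, j ≤ k → k ≤ j → p.getVert k ∉ S := by
    intro k h1 h2
    have hk : k = j := by omega
    rw [hk]; exact hjS
  have hexb : ∃ b, ∀ k, b ≤ k → k ≤ j → p.getVert k ∉ S := ⟨j, hPj⟩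
  set b := Nat.find hexb with hb_def
  have hbspec := Nat.find_spec hexb
  have hbj : b ≤ j := Nat.find_min' hexb hPj
  have hib : i < b := by
    by_contra hcon
    obtain ⟨m, hm1, hm2, hm3⟩ := hmid
    exact hbspec m (by omega) (by omega) hm3
  have hbS : p.getVert (b-1) ∈ S := by
    by_contra hcon
    refine Nat.find_min hexb (show b - 1 < b by omega) ?_
    intro k h1 h2
    rcases Nat.lt_or_ge k b with hk | hk
    · have hk' : k = b - 1 := by omega
      rw [hk']; exact hcon
    · exact hbspec k hk h2
  have hrb : j - b ≤ rankAt G p S j := by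
    apply le_csSup
    · exact ⟨j, fun r hr => by obtain ⟨a', ha', _⟩ := hr; omega⟩
    · exact ⟨b, by omega, hbspec⟩
  have hnoPre : a = 0 → ¬ (∃ m < i, p.getVert m ∈ S) := by
    intro ha0 ⟨m, hm1, hm2⟩
    exact haspec m (by omega) (by omega) hm2
  clear_value a b
  clear haspec hbspec hPi hPj
  -- construct hl and apply core
  rcases Nat.eq_zero_or_pos a with ha0 | hapos
  · -- a = 0 case: single attachment s'
    obtain ⟨f, hfinj, hf⟩ := hmatch {p.getVert (b-1)}
      (by intro v hv; rw [Set.mem_singleton_iff] at hv; rw [hv]; exact hbS)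
      (by rw [Set.ncard_singleton]; omega)
    obtain ⟨hfH, hfadj⟩ := hf _ (Set.mem_singleton _)
    set h' : V := f (p.getVert (b-1)) with hh'
    set hl : List V := (hfin.toFinset.erase h').toList ++ [h'] with hl_def
    have hlnd : hl.Nodup := by
      rw [hl_def, List.nodup_append]
      refine ⟨Finset.nodup_toList _, List.nodup_singleton _, ?_⟩
      intro v hv w hv' hvw
      rw [List.mem_singleton] at hv'
      rw [Finset.mem_toList, Finset.mem_erase] at hv
      exact hv.1 (hvw.trans hv')
    have hlH : ∀ v ∈ hl, v ∈ H := by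
      intro v hv
      rw [hl_def, List.mem_append] at hv
      rcases hv with hv | hv
      · rw [Finset.mem_toList, Finset.mem_erase, Set.Finite.mem_toFinset] at hv
        exact hv.2
      · rw [List.mem_singleton] at hv; rw [hv]; exact hfH
    have hmem' : h' ∈ hfin.toFinset := hfin.mem_toFinset.2 hfH
    have hllen : hl.length = H.ncard := by
      rw [hl_def, List.length_append, List.length_singleton, Finset.length_toList,
        Finset.card_erase_of_mem hmem', Set.ncard_eq_toFinset_card _ hfin]
      have hpos : 0 < hfin.toFinset.card := Finset.card_pos.2 ⟨h', hmem'⟩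
      omega
    have hlne : hl ≠ [] := by
      intro hcon
      rw [hcon] at hllen
      simp only [List.length_nil] at hllen
      omega
    have hllast : hl.getLast? = some h' := by
      rw [hl_def, List.getLast?_append]
      rfl
    obtain ⟨z, q, h1, h2, _⟩ := core hp hdisj hclique hlnd hlH
      (List.head?_eq_head hlne) hllast (show 0 ≤ i by omega) (show i < b from hib)
      hbj hj (by rw [hllen]; omega)
      (fun hcon => absurd hcon (by omega)) hfadj hadj
    exact ⟨z, q, h1, h2, fun hm => absurd hm (hnoPre ha0)⟩
  · -- a > 0 case
    have hs'ne : p.getVert (a-1) ≠ p.getVert (b-1) := by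
      intro hcon
      have := getVert_inj_s9 hp (a-1) (by omega) (b-1) (by omega) hcon
      omega
    rcases eq_or_lt_of_le hncard with h1card | h2card
    · -- H.ncard = 1
      obtain ⟨u, hu⟩ := Set.ncard_eq_one.1 h1card.symm
      obtain ⟨f, _, hf⟩ := hmatch {p.getVert (a-1)}
        (by intro v hv; rw [Set.mem_singleton_iff] at hv; rw [hv]; exact haS hapos)
        (by rw [Set.ncard_singleton]; omega)
      obtain ⟨hfH, hfadj⟩ := hf _ (Set.mem_singleton _)
      obtain ⟨g, _, hg⟩ := hmatch {p.getVert (b-1)}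
        (by intro v hv; rw [Set.mem_singleton_iff] at hv; rw [hv]; exact hbS)
        (by rw [Set.ncard_singleton]; omega)
      obtain ⟨hgH, hgadj⟩ := hg _ (Set.mem_singleton _)
      have hfu : f (p.getVert (a-1)) = u := by rw [hu] at hfH; exact hfH
      have hgu : g (p.getVert (b-1)) = u := by rw [hu] at hgH; exact hgH
      rw [hfu] at hfadj
      rw [hgu] at hgadj
      obtain ⟨z, q, hq1, hq2, hq3⟩ := core hp hdisj hclique
        (List.nodup_singleton u) (by intro v hv; rw [List.mem_singleton] at hv; rw [hv, hu]; exact rfl)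
        (rfl : ([u] : List V).head? = some u) (rfl : ([u] : List V).getLast? = some u)
        hai hib hbj hj
        (by simp only [List.length_singleton]; omega)
        (fun _ => hfadj) hgadj hadj
      exact ⟨z, q, hq1, hq2, fun _ => hq3 hapos⟩
    · -- H.ncard ≥ 2
      obtain ⟨f, hfinj, hf⟩ := hmatch {p.getVert (a-1), p.getVert (b-1)}
        (by
          intro v hv
          rcases hv with hv | hv
          · rw [hv]; exact haS hapos
          · rw [Set.mem_singleton_iff] at hv; rw [hv]; exact hbS)
        (by
          rw [Set.ncard_pair hs'ne]
          omega)
      obtain ⟨hfH, hfadj⟩ := hf _ (Set.mem_insert _ _)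
      obtain ⟨hgH, hgadj⟩ := hf _ (Set.mem_insert_of_mem _ (Set.mem_singleton _))
      set h : V := f (p.getVert (a-1)) with hh_def
      set h' : V := f (p.getVert (b-1)) with hh'_def
      have hne : h ≠ h' := by
        intro hcon
        exact hs'ne (hfinj (Set.mem_insert _ _)
          (Set.mem_insert_of_mem _ (Set.mem_singleton _)) hcon)
      set hl : List V := h :: ((hfin.toFinset \ {h, h'}).toList ++ [h']) with hl_def
      have hmemmid : ∀ v ∈ (hfin.toFinset \ {h, h'}).toList, v ∈ H ∧ v ≠ h ∧ v ≠ h' := by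
        intro v hv
        rw [Finset.mem_toList, Finset.mem_sdiff, Set.Finite.mem_toFinset] at hv
        simp only [Finset.mem_insert, Finset.mem_singleton] at hv
        exact ⟨hv.1, fun hc => hv.2 (Or.inl hc), fun hc => hv.2 (Or.inr hc)⟩
      have hlnd : hl.Nodup := by
        rw [hl_def]
        refine List.nodup_cons.2 ⟨?_, List.nodup_append.2
          ⟨Finset.nodup_toList _, List.nodup_singleton _, ?_⟩⟩
        · intro hc
          rw [List.mem_append, List.mem_singleton] at hc
          rcases hc with hc | hc
          · exact (hmemmid _ hc).2.1 rfl
          · exact hne hc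
        · intro v hv w hv' hvw
          rw [List.mem_singleton] at hv'
          exact (hmemmid _ hv).2.2 (hvw.trans hv')
      have hlH : ∀ v ∈ hl, v ∈ H := by
        intro v hv
        rw [hl_def, List.mem_cons, List.mem_append, List.mem_singleton] at hv
        rcases hv with hv | hv | hv
        · rw [hv]; exact hfH
        · exact (hmemmid _ hv).1
        · rw [hv]; exact hgH
      have hcard2 : ({h, h'} : Finset V) ⊆ hfin.toFinset := by
        intro v hv
        rw [Finset.mem_insert, Finset.mem_singleton] at hv
        rw [Set.Finite.mem_toFinset]
        rcases hv with hv | hv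
        · rw [hv]; exact hfH
        · rw [hv]; exact hgH
      have h2le : 2 ≤ hfin.toFinset.card := by
        rw [← Finset.card_pair hne]
        exact Finset.card_le_card hcard2
      have hllen : hl.length = H.ncard := by
        rw [hl_def]
        simp only [List.length_cons, List.length_append, List.length_singleton,
          List.length_nil, Finset.length_toList, Finset.card_sdiff_of_subset hcard2,
          Finset.card_pair hne, Set.ncard_eq_toFinset_card _ hfin]
        omega
      have hllast : hl.getLast? = some h' := by
        rw [hl_def]
        rw [show (h :: ((hfin.toFinset \ {h, h'}).toList ++ [h'])) =
          (h :: (hfin.toFinset \ {h, h'}).toList) ++ [h'] by simp]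
        rw [List.getLast?_append]
        rfl
      obtain ⟨z, q, hq1, hq2, hq3⟩ := core hp hdisj hclique hlnd hlH
        (rfl : hl.head? = some h) hllast hai hib hbj hj
        (by rw [hllen]; omega) (fun _ => hfadj) hgadj hadj
      exact ⟨z, q, hq1, hq2, fun _ => hq3 hapos⟩


/-- Lemma, parts 3 and 4: `H` is a complete component of `G - V(p)` whose
attachment set `S` satisfies the matching (saturation) condition.  (1) If `w = p.getVert i`
and `w' = p.getVert j` lie in distinct components of `P - S - V(P[x,s₁])` with rank sum less
than `|V(H)|` and `ww' ∈ E(G)`, there is a longer `xy`-path; (2) if they lie in distinct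
components of `P - S` with rank sum less than `|V(H)|` and `ww' ∈ E(G)`, there is a longer
path with endpoint `y`. -/
theorem stmt9 (G : SimpleGraph V) {x y : V} (p : G.Walk x y) (hp : p.IsPath)
    (H : Set V) (hH : IsCompOutside G {v | v ∈ p.support} H) (hcomplete : G.IsClique H)
    (hmatch : ∀ S0 ⊆ attachSet G p H, S0.ncard ≤ H.ncard →
      ∃ f : V → V, Set.InjOn f S0 ∧ ∀ s ∈ S0, f s ∈ H ∧ G.Adj s (f s)) :
    (∀ i j : ℕ, i < j → j ≤ p.length →
      p.getVert i ∉ attachSet G p H → p.getVert j ∉ attachSet G p H →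
      (∃ m < i, p.getVert m ∈ attachSet G p H) →
      (∃ m, i < m ∧ m < j ∧ p.getVert m ∈ attachSet G p H) →
      rankAt G p (attachSet G p H) i + rankAt G p (attachSet G p H) j < H.ncard →
      G.Adj (p.getVert i) (p.getVert j) →
      ∃ q : G.Walk x y, q.IsPath ∧ p.length < q.length) ∧
    (∀ i j : ℕ, i < j → j ≤ p.length →
      p.getVert i ∉ attachSet G p H → p.getVert j ∉ attachSet G p H →
      (∃ m, i < m ∧ m < j ∧ p.getVert m ∈ attachSet G p H) →
      rankAt G p (attachSet G p H) i + rankAt G p (attachSet G p H) j < H.ncard →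
      G.Adj (p.getVert i) (p.getVert j) →
      ∃ (z : V) (q : G.Walk z y), q.IsPath ∧ p.length < q.length) := by
  constructor
  · intro i j hij hj hiS hjS hpre hmid hrank hadj
    obtain ⟨z, q, h1, h2, h3⟩ := main hp hH hcomplete hmatch i j hij hj hiS hjS hmid hrank hadj
    have hz := h3 hpre
    subst hz
    exact ⟨q, h1, h2⟩
  · intro i j hij hj hiS hjS hmid hrank hadj
    obtain ⟨z, q, h1, h2, _⟩ := main hp hH hcomplete hmatch i j hij hj hiS hjS hmid hrank hadj
    exact ⟨z, q, h1, h2⟩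


end GallaiFormal
end
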